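/- Let (x*,y*) ∈ ℝⁿ×ℝᵐ be a point around which f, h, g are twice differentiable and H, G are twice continuously differentiable, and let (x*,u*,v*,y*,μ*,λ*) satisfy the KKT conditions of the constrained minimax problem with λ* − g(x*,y*) > 0 componentwise. Set w* = v* + G(x*) and ξ* = λ* + g(x*,y*), and z* = (x*,u*,v*,y*,μ*,λ*). Then the Kojima mapping F is a locally Lipschitz homeomorphism near (x*,u*,w*,y*,μ*,ξ*) if and only if z* is a strongly regular solution of the generalized equation 0 ∈ 𝓗(z) + N_𝓚(z). -/

import Mathlib

open Matrix
open scoped Classical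

noncomputable section

/-- Vectors in `ℝ^n`. -/
abbrev Vec (n : ℕ) : Type := Fin n → ℝ

/-- Gradient of a scalar function on `ℝ^n`. -/
def grad {n : ℕ} (φ : Vec n → ℝ) (x : Vec n) : Vec n :=
  fun i => fderiv ℝ φ x (Pi.single i 1)

/-- Hessian matrix of a scalar function on `ℝ^n`. -/
def hess {n : ℕ} (φ : Vec n → ℝ) (x : Vec n) : Matrix (Fin n) (Fin n) ℝ :=
  fun i j => fderiv ℝ (fun z => fderiv ℝ φ z (Pi.single j 1)) x (Pi.single i 1)

/-- Jacobian matrix of a map `ℝ^n → ℝ^k` (rows indexed by components). -/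
def jac {n k : ℕ} (F : Vec n → Vec k) (x : Vec n) : Matrix (Fin k) (Fin n) ℝ :=
  fun j i => fderiv ℝ (fun z => F z j) x (Pi.single i 1)

/-- Lagrangian `L(x,y,μ,λ) = f(x,y) + μᵀh(x,y) − λᵀg(x,y)` of the inner problem `(P_x)`. -/
def Lag {n m m₁ m₂ : ℕ} (f : Vec n → Vec m → ℝ) (h : Vec n → Vec m → Vec m₁)
    (g : Vec n → Vec m → Vec m₂) (x : Vec n) (y : Vec m) (μ : Vec m₁) (lam : Vec m₂) : ℝ :=
  f x y + ∑ j, μ j * h x y j - ∑ i, lam i * g x y i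

/-- `∇_y L(x,y,μ,λ)`. -/
def gradY {n m m₁ m₂ : ℕ} (f : Vec n → Vec m → ℝ) (h : Vec n → Vec m → Vec m₁)
    (g : Vec n → Vec m → Vec m₂) (x : Vec n) (y : Vec m) (μ : Vec m₁) (lam : Vec m₂) : Vec m :=
  grad (fun z => Lag f h g x z μ lam) y

/-- `∇_x L(x,y,μ,λ)`. -/
def gradX {n m m₁ m₂ : ℕ} (f : Vec n → Vec m → ℝ) (h : Vec n → Vec m → Vec m₁)
    (g : Vec n → Vec m → Vec m₂) (x : Vec n) (y : Vec m) (μ : Vec m₁) (lam : Vec m₂) : Vec n :=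
  grad (fun x' => Lag f h g x' y μ lam) x

/-- `∇²_{yy} L(x,y,μ,λ)`. -/
def hessYY {n m m₁ m₂ : ℕ} (f : Vec n → Vec m → ℝ) (h : Vec n → Vec m → Vec m₁)
    (g : Vec n → Vec m → Vec m₂) (x : Vec n) (y : Vec m) (μ : Vec m₁) (lam : Vec m₂) :
    Matrix (Fin m) (Fin m) ℝ :=
  hess (fun z => Lag f h g x z μ lam) y

/-- `∇²_{xx} L(x,y,μ,λ)`. -/
def hessXX {n m m₁ m₂ : ℕ} (f : Vec n → Vec m → ℝ) (h : Vec n → Vec m → Vec m₁)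
    (g : Vec n → Vec m → Vec m₂) (x : Vec n) (y : Vec m) (μ : Vec m₁) (lam : Vec m₂) :
    Matrix (Fin n) (Fin n) ℝ :=
  hess (fun x' => Lag f h g x' y μ lam) x

/-- Mixed second derivative `∇²_{yx} L(x,y,μ,λ)` (an `m × n` matrix, entry `(j,i)` is
`∂²L/∂x_i∂y_j`). -/
def hessYX {n m m₁ m₂ : ℕ} (f : Vec n → Vec m → ℝ) (h : Vec n → Vec m → Vec m₁)
    (g : Vec n → Vec m → Vec m₂) (x : Vec n) (y : Vec m) (μ : Vec m₁) (lam : Vec m₂) :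
    Matrix (Fin m) (Fin n) ℝ :=
  fun j i => fderiv ℝ (fun x' => fderiv ℝ (fun z => Lag f h g x' z μ lam) y (Pi.single j 1))
    x (Pi.single i 1)

/-- Feasible set `Φ = {x : H(x)=0, G(x)≤0}` of the outer problem. -/
def PhiSet {n n₁ n₂ : ℕ} (H : Vec n → Vec n₁) (G : Vec n → Vec n₂) : Set (Vec n) :=
  {x | H x = 0 ∧ ∀ i, G x i ≤ 0}

/-- Feasible set `Y(x) = {y : h(x,y)=0, g(x,y)≤0}` of the inner problem. -/
def Yset {n m m₁ m₂ : ℕ} (h : Vec n → Vec m → Vec m₁) (g : Vec n → Vec m → Vec m₂)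
    (x : Vec n) : Set (Vec m) :=
  {y | h x y = 0 ∧ ∀ i, g x y i ≤ 0}

/-- KKT conditions of the inner problem `(P_x)` at `(y,μ,λ)`. -/
def InnerKKT {n m m₁ m₂ : ℕ} (f : Vec n → Vec m → ℝ) (h : Vec n → Vec m → Vec m₁)
    (g : Vec n → Vec m → Vec m₂) (x : Vec n) (y : Vec m) (μ : Vec m₁) (lam : Vec m₂) : Prop :=
  gradY f h g x y μ lam = 0 ∧ h x y = 0 ∧
    (∀ i, 0 ≤ lam i) ∧ (∀ i, g x y i ≤ 0) ∧ (∀ i, lam i * g x y i = 0)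

/-- Linear independence constraint qualification for the inner problem at `(x,y)`:
the gradients of the equality constraints together with those of the active inequality
constraints are linearly independent. -/
def InnerLICQ {n m m₁ m₂ : ℕ} (h : Vec n → Vec m → Vec m₁) (g : Vec n → Vec m → Vec m₂)
    (x : Vec n) (y : Vec m) : Prop :=
  LinearIndependent ℝ (Sum.elim (fun j : Fin m₁ => grad (fun z => h x z j) y)
    (fun i : {i : Fin m₂ // g x y i = 0} => grad (fun z => g x z i.1) y))

/-- Critical cone `C_x(y)` of the inner problem `(P_x)`. -/
def innerCone {n m m₁ m₂ : ℕ} (f : Vec n → Vec m → ℝ) (h : Vec n → Vec m → Vec m₁)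
    (g : Vec n → Vec m → Vec m₂) (x : Vec n) (y : Vec m) : Set (Vec m) :=
  {d | jac (h x) y *ᵥ d = 0 ∧
    (∀ i, g x y i = 0 → grad (fun z => g x z i) y ⬝ᵥ d ≤ 0) ∧
    grad (f x) y ⬝ᵥ d ≤ 0}

/-- Jacobian uniqueness conditions of the inner problem `(P_x)` at `(y,μ,λ)`:
KKT conditions, LICQ, strict complementarity, and the second-order sufficient
optimality condition. -/
def InnerJU {n m m₁ m₂ : ℕ} (f : Vec n → Vec m → ℝ) (h : Vec n → Vec m → Vec m₁)
    (g : Vec n → Vec m → Vec m₂) (x : Vec n) (y : Vec m) (μ : Vec m₁) (lam : Vec m₂) : Prop :=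
  InnerKKT f h g x y μ lam ∧ InnerLICQ h g x y ∧
    (∀ i, 0 < lam i - g x y i) ∧
    (∀ d ∈ innerCone f h g x y, d ≠ 0 → d ⬝ᵥ hessYY f h g x y μ lam *ᵥ d < 0)

/-- The active index set `α = {i : g_i(x,y) = 0}` of the inner problem. -/
def activeSet {n m m₂ : ℕ} (g : Vec n → Vec m → Vec m₂) (x : Vec n) (y : Vec m) :
    Finset (Fin m₂) :=
  Finset.univ.filter fun i => g x y i = 0

/-- The inner KKT matrix `K_α` with block rows
`[∇²_{yy}L, J_y hᵀ, −J_y g_αᵀ]`, `[J_y h, 0, 0]`, `[−J_y g_α, 0, 0]`. -/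
def Kmat {n m m₁ m₂ : ℕ} (f : Vec n → Vec m → ℝ) (h : Vec n → Vec m → Vec m₁)
    (g : Vec n → Vec m → Vec m₂) (α : Finset (Fin m₂)) (x : Vec n) (y : Vec m)
    (μ : Vec m₁) (lam : Vec m₂) :
    Matrix (Fin m ⊕ (Fin m₁ ⊕ ↥α)) (Fin m ⊕ (Fin m₁ ⊕ ↥α)) ℝ :=
  Matrix.fromBlocks (hessYY f h g x y μ lam)
    (Matrix.fromRows (jac (h x) y)
      (-((jac (g x) y).submatrix (fun a : ↥α => (a : Fin m₂)) id)))ᵀ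
    (Matrix.fromRows (jac (h x) y)
      (-((jac (g x) y).submatrix (fun a : ↥α => (a : Fin m₂)) id)))
    0

/-- The matrix `N_α` with block rows `∇²_{yx}L`, `J_x h`, `J_x g_α`. -/
def Nmat {n m m₁ m₂ : ℕ} (f : Vec n → Vec m → ℝ) (h : Vec n → Vec m → Vec m₁)
    (g : Vec n → Vec m → Vec m₂) (α : Finset (Fin m₂)) (x : Vec n) (y : Vec m)
    (μ : Vec m₁) (lam : Vec m₂) :
    Matrix (Fin m ⊕ (Fin m₁ ⊕ ↥α)) (Fin n) ℝ :=
  Matrix.fromRows (hessYX f h g x y μ lam)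
    (Matrix.fromRows (jac (fun x' => h x' y) x)
      ((jac (fun x' => g x' y) x).submatrix (fun a : ↥α => (a : Fin m₂)) id))

/-- The reduced Hessian `Ψ = ∇²_{xx}L − N_αᵀ K_α⁻¹ N_α` (active set taken at `(x,y)`). -/
def Psi {n m m₁ m₂ : ℕ} (f : Vec n → Vec m → ℝ) (h : Vec n → Vec m → Vec m₁)
    (g : Vec n → Vec m → Vec m₂) (x : Vec n) (y : Vec m) (μ : Vec m₁) (lam : Vec m₂) :
    Matrix (Fin n) (Fin n) ℝ :=
  hessXX f h g x y μ lam -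
    (Nmat f h g (activeSet g x y) x y μ lam)ᵀ * (Kmat f h g (activeSet g x y) x y μ lam)⁻¹ *
      Nmat f h g (activeSet g x y) x y μ lam

/-- The multiplier set `Λ(x)` of the outer problem: pairs `(u,v)` with
`∇_x L + JH(x)ᵀu + JG(x)ᵀv = 0`, `H(x)=0`, `0 ≤ v ⊥ G(x) ≤ 0`. -/
def LambdaSet {n m n₁ n₂ m₁ m₂ : ℕ} (f : Vec n → Vec m → ℝ) (h : Vec n → Vec m → Vec m₁)
    (g : Vec n → Vec m → Vec m₂) (H : Vec n → Vec n₁) (G : Vec n → Vec n₂)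
    (x : Vec n) (y : Vec m) (μ : Vec m₁) (lam : Vec m₂) : Set (Vec n₁ × Vec n₂) :=
  {uv | gradX f h g x y μ lam + (jac H x)ᵀ *ᵥ uv.1 + (jac G x)ᵀ *ᵥ uv.2 = 0 ∧
    H x = 0 ∧ (∀ i, 0 ≤ uv.2 i) ∧ (∀ i, G x i ≤ 0) ∧ (∀ i, uv.2 i * G x i = 0)}

/-- Linear independence constraint qualification for the outer problem at `x`. -/
def OuterLICQ {n n₁ n₂ : ℕ} (H : Vec n → Vec n₁) (G : Vec n → Vec n₂) (x : Vec n) : Prop :=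
  LinearIndependent ℝ (Sum.elim (fun j : Fin n₁ => grad (fun x' => H x' j) x)
    (fun i : {i : Fin n₂ // G x i = 0} => grad (fun x' => G x' i.1) x))

/-- The outer critical cone `C(x)`. -/
def upperCone {n m n₁ n₂ m₁ m₂ : ℕ} (f : Vec n → Vec m → ℝ) (h : Vec n → Vec m → Vec m₁)
    (g : Vec n → Vec m → Vec m₂) (H : Vec n → Vec n₁) (G : Vec n → Vec n₂)
    (x : Vec n) (y : Vec m) (μ : Vec m₁) (lam : Vec m₂) : Set (Vec n) :=
  {d | jac H x *ᵥ d = 0 ∧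
    (∀ i, G x i = 0 → grad (fun x' => G x' i) x ⬝ᵥ d ≤ 0) ∧
    gradX f h g x y μ lam ⬝ᵥ d ≤ 0}

/-- Quadratic form `⟨[Σ_j u_j ∇²H_j(x) + Σ_i v_i ∇²G_i(x)]d, d⟩`. -/
def upperQuad {n n₁ n₂ : ℕ} (H : Vec n → Vec n₁) (G : Vec n → Vec n₂) (x : Vec n)
    (uv : Vec n₁ × Vec n₂) (d : Vec n) : ℝ :=
  d ⬝ᵥ ((∑ j, uv.1 j • hess (fun x' => H x' j) x
    + ∑ i, uv.2 i • hess (fun x' => G x' i) x) *ᵥ d)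

/-- Second-order sufficient condition term at a direction `d`:
`sup_{(u,v)∈Λ(x)} ⟨[Σ u_j∇²H_j + Σ v_i∇²G_i]d,d⟩ + ⟨[∇²_{xx}L − N_αᵀK_α⁻¹N_α]d,d⟩`. -/
def secondOrderTerm {n m n₁ n₂ m₁ m₂ : ℕ} (f : Vec n → Vec m → ℝ)
    (h : Vec n → Vec m → Vec m₁) (g : Vec n → Vec m → Vec m₂)
    (H : Vec n → Vec n₁) (G : Vec n → Vec n₂)
    (x : Vec n) (y : Vec m) (μ : Vec m₁) (lam : Vec m₂) (d : Vec n) : ℝ :=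
  sSup ((fun uv => upperQuad H G x uv d) '' LambdaSet f h g H G x y μ lam) +
    d ⬝ᵥ Psi f h g x y μ lam *ᵥ d

/-- Jacobian uniqueness condition of the constrained minimax problem (Definition 3.1):
(i) outer KKT conditions, (ii) outer LICQ, (iii) outer strict complementarity,
(iv) inner Jacobian uniqueness conditions, (v) second-order sufficient condition on the
critical cone `C(x)`. -/
def MinimaxJU {n m n₁ n₂ m₁ m₂ : ℕ} (f : Vec n → Vec m → ℝ) (h : Vec n → Vec m → Vec m₁)
    (g : Vec n → Vec m → Vec m₂) (H : Vec n → Vec n₁) (G : Vec n → Vec n₂)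
    (x : Vec n) (u : Vec n₁) (v : Vec n₂) (y : Vec m) (μ : Vec m₁) (lam : Vec m₂) : Prop :=
  (u, v) ∈ LambdaSet f h g H G x y μ lam ∧
  OuterLICQ H G x ∧
  (∀ i, G x i = 0 → 0 < v i - G x i) ∧
  (y ∈ Yset h g x ∧ InnerJU f h g x y μ lam) ∧
  (∀ d ∈ upperCone f h g H G x y μ lam, d ≠ 0 →
    0 < secondOrderTerm f h g H G x y μ lam d)

/-- Property A of the constrained minimax problem (Definition 4.2): outer KKT, outer LICQ,
inner Jacobian uniqueness conditions, and the strong second-order sufficient condition on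
the affine hull of the critical cone (no outer strict complementarity required). -/
def PropertyA {n m n₁ n₂ m₁ m₂ : ℕ} (f : Vec n → Vec m → ℝ) (h : Vec n → Vec m → Vec m₁)
    (g : Vec n → Vec m → Vec m₂) (H : Vec n → Vec n₁) (G : Vec n → Vec n₂)
    (x : Vec n) (u : Vec n₁) (v : Vec n₂) (y : Vec m) (μ : Vec m₁) (lam : Vec m₂) : Prop :=
  (u, v) ∈ LambdaSet f h g H G x y μ lam ∧
  OuterLICQ H G x ∧
  (y ∈ Yset h g x ∧ InnerJU f h g x y μ lam) ∧
  (∀ d ∈ (affineSpan ℝ (upperCone f h g H G x y μ lam) : Set (Vec n)), d ≠ 0 →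
    0 < secondOrderTerm f h g H G x y μ lam d)

/-- `(x*,y*)` is a local minimax point (Definition 1.1). -/
def LocalMinimax {n m n₁ n₂ m₁ m₂ : ℕ} (f : Vec n → Vec m → ℝ) (h : Vec n → Vec m → Vec m₁)
    (g : Vec n → Vec m → Vec m₂) (H : Vec n → Vec n₁) (G : Vec n → Vec n₂)
    (xs : Vec n) (ys : Vec m) : Prop :=
  ∃ δ₀ > (0:ℝ), ∃ η : ℝ → ℝ, (∀ δ ∈ Set.Ioc 0 δ₀, 0 ≤ η δ) ∧
    Filter.Tendsto η (nhdsWithin 0 (Set.Ioi 0)) (nhds 0) ∧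
    ∀ δ ∈ Set.Ioc (0:ℝ) δ₀, ∀ x ∈ Metric.closedBall xs δ ∩ PhiSet H G,
      ∀ y ∈ Yset h g xs ∩ Metric.closedBall ys δ,
        f xs y ≤ f xs ys ∧
        f xs ys ≤ sSup (f x '' (Yset h g x ∩ Metric.closedBall ys (η δ)))

/-- Componentwise positive part. -/
def vecPos {p : ℕ} (w : Vec p) : Vec p := fun i => max 0 (w i)

/-- Componentwise negative part. -/
def vecNeg {p : ℕ} (w : Vec p) : Vec p := fun i => min 0 (w i)

/-- The space of the Kojima mapping variables `(x,u,w,y,μ,ξ)`. -/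
abbrev ZSpace (n n₁ n₂ m m₁ m₂ : ℕ) : Type :=
  Vec n × Vec n₁ × Vec n₂ × Vec m × Vec m₁ × Vec m₂

/-- The Kojima mapping of the constrained minimax problem. -/
def Kojima {n m n₁ n₂ m₁ m₂ : ℕ} (f : Vec n → Vec m → ℝ) (h : Vec n → Vec m → Vec m₁)
    (g : Vec n → Vec m → Vec m₂) (H : Vec n → Vec n₁) (G : Vec n → Vec n₂) :
    ZSpace n n₁ n₂ m m₁ m₂ → ZSpace n n₁ n₂ m m₁ m₂ :=
  fun z =>
    (gradX f h g z.1 z.2.2.2.1 z.2.2.2.2.1 (vecPos z.2.2.2.2.2)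
        + (jac H z.1)ᵀ *ᵥ z.2.1 + (jac G z.1)ᵀ *ᵥ vecPos z.2.2.1,
     H z.1,
     G z.1 - vecNeg z.2.2.1,
     gradY f h g z.1 z.2.2.2.1 z.2.2.2.2.1 (vecPos z.2.2.2.2.2),
     h z.1 z.2.2.2.1,
     -g z.1 z.2.2.2.1 + vecNeg z.2.2.2.2.2)

/-- Euclidean pairing on `ZSpace`. -/
def pairZ {n n₁ n₂ m m₁ m₂ : ℕ} (a b : ZSpace n n₁ n₂ m m₁ m₂) : ℝ :=
  a.1 ⬝ᵥ b.1 + a.2.1 ⬝ᵥ b.2.1 + a.2.2.1 ⬝ᵥ b.2.2.1 + a.2.2.2.1 ⬝ᵥ b.2.2.2.1 +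
    a.2.2.2.2.1 ⬝ᵥ b.2.2.2.2.1 + a.2.2.2.2.2 ⬝ᵥ b.2.2.2.2.2

/-- The cone `𝓚 = ℝⁿ×ℝ^{n₁}×ℝ₊^{n₂}×ℝᵐ×ℝ^{m₁}×ℝ₊^{m₂}`. -/
def Kcone {n n₁ n₂ m m₁ m₂ : ℕ} : Set (ZSpace n n₁ n₂ m m₁ m₂) :=
  {z | (∀ i, 0 ≤ z.2.2.1 i) ∧ ∀ i, 0 ≤ z.2.2.2.2.2 i}

/-- Normal cone of a convex set `K` at `z` (w.r.t. the Euclidean pairing);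
empty if `z ∉ K`. -/
def normalCone {n n₁ n₂ m m₁ m₂ : ℕ} (K : Set (ZSpace n n₁ n₂ m m₁ m₂))
    (z : ZSpace n n₁ n₂ m m₁ m₂) : Set (ZSpace n n₁ n₂ m m₁ m₂) :=
  {w | z ∈ K ∧ ∀ z' ∈ K, pairZ w (z' - z) ≤ 0}

/-- The map `𝓗(z)` of the generalized-equation formulation of the KKT system. -/
def Hmap {n m n₁ n₂ m₁ m₂ : ℕ} (f : Vec n → Vec m → ℝ) (h : Vec n → Vec m → Vec m₁)
    (g : Vec n → Vec m → Vec m₂) (H : Vec n → Vec n₁) (G : Vec n → Vec n₂) :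
    ZSpace n n₁ n₂ m m₁ m₂ → ZSpace n n₁ n₂ m m₁ m₂ :=
  fun z =>
    (gradX f h g z.1 z.2.2.2.1 z.2.2.2.2.1 z.2.2.2.2.2
        + (jac H z.1)ᵀ *ᵥ z.2.1 + (jac G z.1)ᵀ *ᵥ z.2.2.1,
     H z.1,
     -G z.1,
     gradY f h g z.1 z.2.2.2.1 z.2.2.2.2.1 z.2.2.2.2.2,
     h z.1 z.2.2.2.1,
     -g z.1 z.2.2.2.1)

/-- `z*` is a strongly regular solution of `0 ∈ Φ(z) + N_K(z)` (Definition 4.1 of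
Robinson): for all small `η`, the linearized generalized equation
`η ∈ Φ(z*) + JΦ(z*)(z−z*) + N_K(z)` has a unique solution `ẑ(η)` near `z*`, depending
Lipschitz-continuously on `η`. -/
def StrongRegular {n m n₁ n₂ m₁ m₂ : ℕ} (Φ : ZSpace n n₁ n₂ m m₁ m₂ → ZSpace n n₁ n₂ m m₁ m₂)
    (K : Set (ZSpace n n₁ n₂ m m₁ m₂)) (zs : ZSpace n n₁ n₂ m m₁ m₂) : Prop :=
  ∃ δ > (0:ℝ), ∃ ε > (0:ℝ), ∃ zhat : ZSpace n n₁ n₂ m m₁ m₂ → ZSpace n n₁ n₂ m m₁ m₂,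
    (∀ η ∈ Metric.closedBall (0 : ZSpace n n₁ n₂ m m₁ m₂) δ,
      zhat η ∈ Metric.closedBall zs ε ∧
      η - (Φ zs + fderiv ℝ Φ zs (zhat η - zs)) ∈ normalCone K (zhat η) ∧
      ∀ z ∈ Metric.closedBall zs ε,
        η - (Φ zs + fderiv ℝ Φ zs (z - zs)) ∈ normalCone K z → z = zhat η) ∧
    ∃ L : NNReal, LipschitzOnWith L zhat (Metric.closedBall 0 δ)

/-- `Φ` is a locally Lipschitz homeomorphism near `z`. -/
def LocLipHomeo {E : Type*} [NormedAddCommGroup E] (Φ : E → E) (z : E) : Prop :=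
  ∃ U ∈ nhds z, ∃ V ∈ nhds (Φ z), ∃ Ψ : E → E,
    Φ '' U = V ∧ Set.MapsTo Ψ V U ∧
    (∀ a ∈ U, Ψ (Φ a) = a) ∧ (∀ b ∈ V, Φ (Ψ b) = b) ∧
    (∃ L₁ : NNReal, LipschitzOnWith L₁ Φ U) ∧ ∃ L₂ : NNReal, LipschitzOnWith L₂ Ψ V

/-- B-subdifferential of a map between normed spaces. -/
def Bsubdiff {E F : Type*} [NormedAddCommGroup E] [NormedSpace ℝ E]
    [NormedAddCommGroup F] [NormedSpace ℝ F] (Φ : E → F) (z : E) : Set (E →L[ℝ] F) :=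
  {V | ∃ zk : ℕ → E, (∀ k, DifferentiableAt ℝ Φ (zk k)) ∧
    Filter.Tendsto zk Filter.atTop (nhds z) ∧
    Filter.Tendsto (fun k => fderiv ℝ Φ (zk k)) Filter.atTop (nhds V)}

/-- Clarke subdifferential: convex hull of the B-subdifferential. -/
def ClarkeSubdiff {E F : Type*} [NormedAddCommGroup E] [NormedSpace ℝ E]
    [NormedAddCommGroup F] [NormedSpace ℝ F] (Φ : E → F) (z : E) : Set (E →L[ℝ] F) :=
  convexHull ℝ (Bsubdiff Φ z)

section General
variable {E : Type*} [NormedAddCommGroup E]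

theorem locLipHomeo_comp_involution (D : E → E) (hD : ∀ a, D (D a) = a)
    (hlip : LipschitzWith 1 D) (Φ : E → E) (z : E) (hΦ : LocLipHomeo Φ z) :
    LocLipHomeo (fun a => D (Φ a)) z := by
  obtain ⟨U, hU, V, hV, Ψ, himg, hmaps, hlft, hrgt, ⟨L₁, hL₁⟩, ⟨L₂, hL₂⟩⟩ := hΦ
  have hDV : D '' V = D ⁻¹' V := by
    ext a; constructor
    · rintro ⟨c, hc, rfl⟩; simpa [hD] using hc
    · intro ha; exact ⟨D a, ha, hD a⟩
  refine ⟨U, hU, D '' V, ?_, Ψ ∘ D, ?_, ?_, ?_, ?_, ?_, ?_⟩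
  · rw [hDV]
    exact hlip.continuous.continuousAt.preimage_mem_nhds (by simpa [hD] using hV)
  · rw [← himg]
    exact Set.image_comp D Φ U
  · rintro b ⟨c, hc, rfl⟩
    simpa [hD] using hmaps hc
  · intro a ha; simp only [Function.comp_apply, hD]; exact hlft a ha
  · rintro b ⟨c, hc, rfl⟩
    simp only [Function.comp_apply, hD]
    rw [hrgt c hc]
  · exact ⟨1 * L₁, hlip.comp_lipschitzOnWith hL₁⟩
  · refine ⟨L₂ * 1, hL₂.comp hlip.lipschitzOnWith ?_⟩
    rintro b ⟨c, hc, rfl⟩; simpa [hD] using hc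

end General

section Perturb
variable {E : Type*} [NormedAddCommGroup E] [CompleteSpace E]

theorem locLipHomeo_perturb (Φ Φt : E → E) (p : E)
    (hom : LocLipHomeo Φ p) (heq : Φt p = Φ p)
    (hsm : ∀ c : ℝ, 0 < c → ∃ r > 0, ∀ a ∈ Metric.ball p r, ∀ b ∈ Metric.ball p r,
      dist (Φt a - Φ a) (Φt b - Φ b) ≤ c * dist a b) :
    LocLipHomeo Φt p := by
  classical
  obtain ⟨U, hU, V, hV, Ψ, himg, hmaps, hlft, hrgt, ⟨L₁, hL₁⟩, ⟨L₂, hL₂⟩⟩ := hom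
  set q := Φ p with hq
  have hqV : q ∈ V := mem_of_mem_nhds hV
  have hpU : p ∈ U := mem_of_mem_nhds hU
  set Λ : ℝ := (L₂ : ℝ) + 1 with hΛdef
  have hL₂0 : (0:ℝ) ≤ (L₂ : ℝ) := L₂.coe_nonneg
  have hΛ : 0 < Λ := by positivity
  have hL₂Λ : (L₂ : ℝ) ≤ Λ := by simp [hΛdef]
  set c : ℝ := 1 / (2 * Λ) with hcdef
  have hc : 0 < c := by positivity
  have hone : (1:ℝ) ≤ Λ := by rw [hΛdef]; linarith
  have hchalf : c ≤ 1 / 2 := by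
    rw [hcdef, div_le_div_iff₀ (by positivity) (by norm_num)]
    linarith
  have hcL : (L₂ : ℝ) * c ≤ 1 / 2 := by
    have h1 : (L₂ : ℝ) * c ≤ Λ * c := mul_le_mul_of_nonneg_right hL₂Λ hc.le
    have h2 : Λ * c = 1/2 := by rw [hcdef]; field_simp
    linarith
  obtain ⟨r₀, hr₀, hsm'⟩ := hsm c hc
  obtain ⟨rU, hrU, hballU⟩ := Metric.mem_nhds_iff.mp hU
  obtain ⟨rV, hrV, hballV⟩ := Metric.mem_nhds_iff.mp hV
  have hLip₁ : ∀ a ∈ U, ∀ b ∈ U, dist (Φ a) (Φ b) ≤ (L₁ : ℝ) * dist a b :=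
    lipschitzOnWith_iff_dist_le_mul.mp hL₁
  have hLip₂ : ∀ a ∈ V, ∀ b ∈ V, dist (Ψ a) (Ψ b) ≤ (L₂ : ℝ) * dist a b :=
    lipschitzOnWith_iff_dist_le_mul.mp hL₂
  have hΦV : ∀ a ∈ U, Φ a ∈ V := fun a ha => himg ▸ Set.mem_image_of_mem Φ ha
  have low : ∀ a ∈ U, ∀ b ∈ U, dist a b ≤ (L₂ : ℝ) * dist (Φ a) (Φ b) := by
    intro a ha b hb
    calc dist a b = dist (Ψ (Φ a)) (Ψ (Φ b)) := by rw [hlft a ha, hlft b hb]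
    _ ≤ (L₂:ℝ) * dist (Φ a) (Φ b) := hLip₂ _ (hΦV a ha) _ (hΦV b hb)
  have inj : ∀ a ∈ U ∩ Metric.ball p r₀, ∀ b ∈ U ∩ Metric.ball p r₀,
      dist a b ≤ 2 * Λ * dist (Φt a) (Φt b) := by
    rintro a ⟨haU, har⟩ b ⟨hbU, hbr⟩
    have h1 : dist (Φ a) (Φ b) ≤ dist (Φt a) (Φt b) + c * dist a b := by
      have h2 := hsm' a har b hbr
      have h3 : dist (Φ a) (Φ b) ≤ dist (Φt a) (Φt b)
          + dist (Φt a - Φ a) (Φt b - Φ b) := by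
        have ha' : Φ a = Φt a - (Φt a - Φ a) := by abel
        have hb' : Φ b = Φt b - (Φt b - Φ b) := by abel
        calc dist (Φ a) (Φ b) = dist (Φt a - (Φt a - Φ a)) (Φt b - (Φt b - Φ b)) := by
              rw [← ha', ← hb']
        _ ≤ dist (Φt a) (Φt b) + dist (Φt a - Φ a) (Φt b - Φ b) := dist_sub_sub_le _ _ _ _
      linarith
    have h4 := low a haU b hbU
    have h5 : dist a b ≤ (L₂:ℝ) * dist (Φt a) (Φt b) + ((L₂:ℝ) * c) * dist a b := by
      calc dist a b ≤ (L₂:ℝ) * (dist (Φt a) (Φt b) + c * dist a b) :=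
            h4.trans (mul_le_mul_of_nonneg_left h1 hL₂0)
      _ = (L₂:ℝ) * dist (Φt a) (Φt b) + ((L₂:ℝ) * c) * dist a b := by ring
    have h6 : ((L₂:ℝ) * c) * dist a b ≤ (1/2) * dist a b :=
      mul_le_mul_of_nonneg_right hcL dist_nonneg
    have h7 : (L₂:ℝ) * dist (Φt a) (Φt b) ≤ Λ * dist (Φt a) (Φt b) :=
      mul_le_mul_of_nonneg_right hL₂Λ dist_nonneg
    linarith
  set rs : ℝ := min (min rU r₀) rV / 2 with hrsdef
  have hmin3 : 0 < min (min rU r₀) rV := lt_min (lt_min hrU hr₀) hrV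
  have hrs0 : 0 < rs := by rw [hrsdef]; positivity
  set s : Set E := Metric.closedBall p rs with hsdef
  have hrsrU : rs < rU := by
    have h1 : min (min rU r₀) rV ≤ rU := le_trans (min_le_left _ _) (min_le_left _ _)
    rw [hrsdef]; linarith
  have hrsr₀ : rs < r₀ := by
    have h1 : min (min rU r₀) rV ≤ r₀ := le_trans (min_le_left _ _) (min_le_right _ _)
    rw [hrsdef]; linarith
  have hrsrV : rs ≤ rV / 2 := by
    have h1 : min (min rU r₀) rV ≤ rV := min_le_right _ _
    rw [hrsdef]; linarith
  have hsU : s ⊆ U := fun a ha =>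
    hballU (lt_of_le_of_lt (Metric.mem_closedBall.mp ha) hrsrU)
  have hsr₀ : s ⊆ Metric.ball p r₀ := fun a ha =>
    Metric.mem_ball.mpr (lt_of_le_of_lt (Metric.mem_closedBall.mp ha) hrsr₀)
  have hppr₀ : p ∈ Metric.ball p r₀ := Metric.mem_ball_self hr₀
  have hps : p ∈ s := Metric.mem_closedBall_self hrs0.le
  have hek : ∀ a ∈ s, dist (Φt a - Φ a) 0 ≤ c * rs := by
    intro a ha
    have h0 : Φt p - Φ p = 0 := by rw [heq]; abel
    calc dist (Φt a - Φ a) 0 = dist (Φt a - Φ a) (Φt p - Φ p) := by rw [h0]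
    _ ≤ c * dist a p := hsm' a (hsr₀ ha) p hppr₀
    _ ≤ c * rs := mul_le_mul_of_nonneg_left (Metric.mem_closedBall.mp ha) hc.le
  set ρ : ℝ := min (rV / 4) (rs / (2 * Λ)) with hρdef
  have hρ : 0 < ρ := lt_min (by linarith) (by positivity)
  have hΨq : Ψ q = p := hlft p hpU
  -- existence of preimages
  have hex : ∀ y ∈ Metric.closedBall q ρ, ∃ a, a ∈ s ∧ Φt a = y := by
    intro y hy
    have hy' : dist y q ≤ ρ := Metric.mem_closedBall.mp hy
    haveI : Nonempty s := ⟨⟨p, hps⟩⟩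
    haveI : CompleteSpace s := IsClosed.completeSpace_coe (hs := Metric.isClosed_closedBall)
    have hvV : ∀ a ∈ s, y - (Φt a - Φ a) ∈ V ∧ dist (y - (Φt a - Φ a)) q ≤ ρ + c * rs := by
      intro a ha
      have h1 : dist (y - (Φt a - Φ a)) q ≤ dist y q + dist (Φt a - Φ a) 0 := by
        have hrw : y - (Φt a - Φ a) - q = (y - q) - (Φt a - Φ a) := by abel
        rw [dist_eq_norm, hrw, dist_eq_norm, dist_eq_norm, sub_zero]
        exact norm_sub_le _ _
      have h2 : dist (y - (Φt a - Φ a)) q ≤ ρ + c * rs := by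
        have := hek a ha
        linarith
      refine ⟨hballV ?_, h2⟩
      have hcrs : c * rs ≤ rs / 2 := by nlinarith
      have h3 : ρ ≤ rV / 4 := min_le_left _ _
      have h4 : ρ + c * rs < rV := by linarith
      exact Metric.mem_ball.mpr (lt_of_le_of_lt h2 h4)
    set T : s → s := fun a => ⟨Ψ (y - (Φt a.1 - Φ a.1)), by
      have hv := hvV a.1 a.2
      have h1 : dist (Ψ (y - (Φt a.1 - Φ a.1))) p ≤ (L₂:ℝ) * (ρ + c * rs) := by
        rw [← hΨq]
        exact le_trans (hLip₂ _ hv.1 _ hqV) (mul_le_mul_of_nonneg_left hv.2 hL₂0)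
      apply Metric.mem_closedBall.mpr
      have h2 : ρ ≤ rs / (2*Λ) := min_le_right _ _
      have h3 : (L₂:ℝ) * ρ ≤ rs / 2 := by
        calc (L₂:ℝ) * ρ ≤ Λ * ρ := mul_le_mul_of_nonneg_right hL₂Λ hρ.le
        _ ≤ Λ * (rs/(2*Λ)) := mul_le_mul_of_nonneg_left h2 hΛ.le
        _ = rs / 2 := by field_simp
      have h4 : (L₂:ℝ) * (c * rs) ≤ rs / 2 := by
        calc (L₂:ℝ) * (c * rs) = ((L₂:ℝ) * c) * rs := by ring
        _ ≤ (1/2) * rs := mul_le_mul_of_nonneg_right hcL hrs0.le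
        _ = rs / 2 := by ring
      nlinarith⟩ with hTdef
    have hcontr : ContractingWith (1/2 : NNReal) T := by
      constructor
      · rw [← NNReal.coe_lt_coe]; norm_num
      · apply LipschitzWith.of_dist_le_mul
        intro a b
        have hva := hvV a.1 a.2
        have hvb := hvV b.1 b.2
        have h1 : dist (Ψ (y - (Φt a.1 - Φ a.1))) (Ψ (y - (Φt b.1 - Φ b.1)))
            ≤ (L₂:ℝ) * dist (y - (Φt a.1 - Φ a.1)) (y - (Φt b.1 - Φ b.1)) :=
          hLip₂ _ hva.1 _ hvb.1
        have h2 : dist (y - (Φt a.1 - Φ a.1)) (y - (Φt b.1 - Φ b.1))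
            = dist (Φt a.1 - Φ a.1) (Φt b.1 - Φ b.1) := dist_sub_left _ _ _
        have h3 := hsm' a.1 (hsr₀ a.2) b.1 (hsr₀ b.2)
        have h4 : dist (T a) (T b) = dist (Ψ (y - (Φt a.1 - Φ a.1))) (Ψ (y - (Φt b.1 - Φ b.1))) := rfl
        have h5 : dist a b = dist a.1 b.1 := rfl
        rw [h4, h5]
        have h6 : dist (Ψ (y - (Φt a.1 - Φ a.1))) (Ψ (y - (Φt b.1 - Φ b.1)))
            ≤ (L₂:ℝ) * (c * dist a.1 b.1) := by
          refine h1.trans ?_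
          rw [h2]
          exact mul_le_mul_of_nonneg_left h3 hL₂0
        have h7 : (L₂:ℝ) * (c * dist a.1 b.1) ≤ (1/2) * dist a.1 b.1 := by
          have := mul_le_mul_of_nonneg_right hcL (dist_nonneg (x := a.1) (y := b.1))
          calc (L₂:ℝ) * (c * dist a.1 b.1) = ((L₂:ℝ)*c) * dist a.1 b.1 := by ring
          _ ≤ (1/2) * dist a.1 b.1 := this
        refine (h6.trans h7).trans ?_
        have : ((1/2 : NNReal) : ℝ) = (1/2 : ℝ) := by norm_num
        rw [this]
    set a₀ : s := ContractingWith.fixedPoint T hcontr with ha₀def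
    have hfix : T a₀ = a₀ := hcontr.fixedPoint_isFixedPt
    have hΨfix : Ψ (y - (Φt a₀.1 - Φ a₀.1)) = a₀.1 := congrArg Subtype.val hfix
    have hvV' := hvV a₀.1 a₀.2
    have hΦΨ : Φ (Ψ (y - (Φt a₀.1 - Φ a₀.1))) = y - (Φt a₀.1 - Φ a₀.1) :=
      hrgt _ hvV'.1
    rw [hΨfix] at hΦΨ
    refine ⟨a₀.1, a₀.2, ?_⟩
    have h8 : Φ a₀.1 + (Φt a₀.1 - Φ a₀.1) = y := eq_sub_iff_add_eq.mp hΦΨ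
    calc Φt a₀.1 = Φ a₀.1 + (Φt a₀.1 - Φ a₀.1) := by abel
    _ = y := h8
  -- the local inverse
  have hex' : ∀ y : E, ∃ a, y ∈ Metric.closedBall q ρ → a ∈ s ∧ Φt a = y := by
    intro y
    by_cases hy : y ∈ Metric.closedBall q ρ
    · obtain ⟨a, ha, hfa⟩ := hex y hy; exact ⟨a, fun _ => ⟨ha, hfa⟩⟩
    · exact ⟨p, fun hmem => absurd hmem hy⟩
  choose Ψt hΨt using hex'
  set ρ' : ℝ := min ρ (rs / (4 * Λ)) with hρ'def
  have hρ'0 : 0 < ρ' := lt_min hρ (by positivity)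
  have hρ'ρ : ρ' ≤ ρ := min_le_left _ _
  set V' : Set E := Metric.ball q ρ' with hV'def
  have hV'sub : V' ⊆ Metric.closedBall q ρ := fun y hy =>
    Metric.mem_closedBall.mpr (le_trans (Metric.mem_ball.mp hy).le hρ'ρ)
  have hΦtLip : ∀ a ∈ s, ∀ b ∈ s, dist (Φt a) (Φt b) ≤ ((L₁:ℝ) + c) * dist a b := by
    intro a ha b hb
    have h1 : dist (Φt a) (Φt b) ≤ dist (Φ a) (Φ b) + dist (Φt a - Φ a) (Φt b - Φ b) := by
      have ha' : Φt a = Φ a + (Φt a - Φ a) := by abel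
      have hb' : Φt b = Φ b + (Φt b - Φ b) := by abel
      calc dist (Φt a) (Φt b) = dist (Φ a + (Φt a - Φ a)) (Φ b + (Φt b - Φ b)) := by
            rw [← ha', ← hb']
      _ ≤ _ := dist_add_add_le _ _ _ _
    have h2 := hLip₁ a (hsU ha) b (hsU hb)
    have h3 := hsm' a (hsr₀ ha) b (hsr₀ hb)
    calc dist (Φt a) (Φt b) ≤ (L₁:ℝ)*dist a b + c*dist a b := by linarith
    _ = ((L₁:ℝ)+c)*dist a b := by ring
  have hΦtcont : ContinuousOn Φt (Metric.ball p rs) := by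
    have hl : LipschitzOnWith (Real.toNNReal ((L₁:ℝ)+c)) Φt (Metric.ball p rs) := by
      apply lipschitzOnWith_iff_dist_le_mul.mpr
      intro a ha b hb
      rw [Real.coe_toNNReal _ (by positivity)]
      exact hΦtLip a (Metric.ball_subset_closedBall ha) b (Metric.ball_subset_closedBall hb)
    exact hl.continuousOn
  set U' : Set E := Metric.ball p rs ∩ Φt ⁻¹' V' with hU'def
  have hΦtp : Φt p = q := heq
  have hqV' : q ∈ V' := Metric.mem_ball_self hρ'0
  have hU'nhds : U' ∈ nhds p := by
    have hopen : IsOpen U' :=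
      hΦtcont.isOpen_inter_preimage Metric.isOpen_ball Metric.isOpen_ball
    exact hopen.mem_nhds ⟨Metric.mem_ball_self hrs0,
      show Φt p ∈ V' from hΦtp ▸ hqV'⟩
  have hmaps' : ∀ y ∈ V', Ψt y ∈ U' := by
    intro y hy
    obtain ⟨hys, hfy⟩ := hΨt y (hV'sub hy)
    have ha : Ψt y ∈ U ∩ Metric.ball p r₀ := ⟨hsU hys, hsr₀ hys⟩
    have hp' : p ∈ U ∩ Metric.ball p r₀ := ⟨hpU, hppr₀⟩
    have hd : dist (Ψt y) p ≤ 2*Λ * dist y q := by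
      have h := inj _ ha _ hp'
      rw [hfy, hΦtp] at h; exact h
    have h2 : dist (Ψt y) p < rs := by
      have h3 : dist y q < ρ' := Metric.mem_ball.mp hy
      have h4 : ρ' ≤ rs/(4*Λ) := min_le_right _ _
      have h5 : 2*Λ*dist y q < 2*Λ*ρ' :=
        mul_lt_mul_of_pos_left h3 (by positivity)
      have h6 : 2*Λ*ρ' ≤ rs/2 := by
        calc 2*Λ*ρ' ≤ 2*Λ*(rs/(4*Λ)) :=
              mul_le_mul_of_nonneg_left h4 (by positivity)
        _ = rs/2 := by field_simp; ring
      have h7 : dist (Ψt y) p < rs/2 := lt_of_le_of_lt hd (h5.trans_le h6)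
      linarith
    refine ⟨Metric.mem_ball.mpr h2, ?_⟩
    show Φt (Ψt y) ∈ V'
    rw [hfy]; exact hy
  refine ⟨U', hU'nhds, V', hΦtp ▸ Metric.isOpen_ball.mem_nhds hqV', Ψt, ?_, ?_, ?_, ?_, ?_, ?_⟩
  · apply Set.Subset.antisymm
    · rintro _ ⟨a, ha, rfl⟩; exact ha.2
    · intro y hy
      exact ⟨Ψt y, hmaps' y hy, (hΨt y (hV'sub hy)).2⟩
  · intro y hy; exact hmaps' y hy
  · intro a ha
    have hy : Φt a ∈ V' := ha.2
    obtain ⟨hbs, hfb⟩ := hΨt (Φt a) (hV'sub hy)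
    have has : a ∈ s := Metric.ball_subset_closedBall ha.1
    have h1 := inj _ ⟨hsU hbs, hsr₀ hbs⟩ _ ⟨hsU has, hsr₀ has⟩
    rw [hfb, dist_self, mul_zero] at h1
    exact eq_of_dist_eq_zero (le_antisymm h1 dist_nonneg)
  · intro y hy; exact (hΨt y (hV'sub hy)).2
  · refine ⟨Real.toNNReal ((L₁:ℝ)+c), ?_⟩
    apply lipschitzOnWith_iff_dist_le_mul.mpr
    intro a ha b hb
    rw [Real.coe_toNNReal _ (by positivity)]
    exact hΦtLip a (Metric.ball_subset_closedBall ha.1) b (Metric.ball_subset_closedBall hb.1)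
  · refine ⟨Real.toNNReal (2*Λ), ?_⟩
    apply lipschitzOnWith_iff_dist_le_mul.mpr
    intro y hy y' hy'
    rw [Real.coe_toNNReal _ (by positivity)]
    obtain ⟨hys, hfy⟩ := hΨt y (hV'sub hy)
    obtain ⟨hys', hfy'⟩ := hΨt y' (hV'sub hy')
    have h := inj _ ⟨hsU hys, hsr₀ hys⟩ _ ⟨hsU hys', hsr₀ hys'⟩
    rw [hfy, hfy'] at h; exact h

end Perturb

section Proj

variable {n n₁ n₂ m m₁ m₂ : ℕ}

/-- Projection onto the cone `Kcone`. -/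
def projK (z : ZSpace n n₁ n₂ m m₁ m₂) : ZSpace n n₁ n₂ m m₁ m₂ :=
  (z.1, z.2.1, vecPos z.2.2.1, z.2.2.2.1, z.2.2.2.2.1, vecPos z.2.2.2.2.2)

lemma projK_mem (z : ZSpace n n₁ n₂ m m₁ m₂) : projK z ∈ Kcone := by
  constructor <;> intro i <;> exact le_max_left 0 _

lemma vecPos_block_nonpos {p : ℕ} (w z' : Vec p) (hz' : ∀ i, 0 ≤ z' i) :
    (w - vecPos w) ⬝ᵥ (z' - vecPos w) ≤ 0 := by
  apply Finset.sum_nonpos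
  intro i _
  simp only [Pi.sub_apply, vecPos]
  rcases le_or_gt 0 (w i) with hw | hw
  · rw [max_eq_right hw]; simp
  · rw [max_eq_left hw.le]
    apply mul_nonpos_of_nonpos_of_nonneg
    · simpa using hw.le
    · simpa using hz' i

lemma sub_projK_mem (z : ZSpace n n₁ n₂ m m₁ m₂) :
    z - projK z ∈ normalCone Kcone (projK z) := by
  refine ⟨projK_mem z, ?_⟩
  intro z' hz'
  have h3 := vecPos_block_nonpos z.2.2.1 z'.2.2.1 hz'.1
  have h6 := vecPos_block_nonpos z.2.2.2.2.2 z'.2.2.2.2.2 hz'.2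
  simp only [pairZ, projK, Prod.fst_sub, Prod.snd_sub, sub_self, zero_dotProduct]
  simpa using add_nonpos h3 h6

lemma vecPos_add_eq {p : ℕ} {w ν : Vec p} (hw : ∀ i, 0 ≤ w i) (hν : ∀ i, ν i ≤ 0)
    (hprod : ∀ i, 0 ≤ ν i * w i) : vecPos (w + ν) = w := by
  funext i
  have hple : ν i * w i ≤ 0 := mul_nonpos_of_nonpos_of_nonneg (hν i) (hw i)
  have hp0 : ν i * w i = 0 := le_antisymm hple (hprod i)
  rcases mul_eq_zero.mp hp0 with hν0 | hw0
  · show max 0 (w i + ν i) = w i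
    rw [hν0, add_zero]; exact max_eq_right (hw i)
  · show max 0 (w i + ν i) = w i
    rw [hw0, zero_add]
    exact max_eq_left (hν i)

lemma dotProduct_self_nonneg' {p : ℕ} (v : Vec p) : 0 ≤ v ⬝ᵥ v :=
  Finset.sum_nonneg fun i _ => mul_self_nonneg (v i)

lemma single_nonneg_apply {p : ℕ} (i j : Fin p) : (0:ℝ) ≤ (Pi.single i (1:ℝ) : Vec p) j := by
  rw [Pi.single_apply]; split <;> norm_num

lemma dist_fst_le' {α β : Type*} [PseudoMetricSpace α] [PseudoMetricSpace β] (p q : α × β) :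
    dist p.1 q.1 ≤ dist p q := by rw [Prod.dist_eq]; exact le_max_left _ _

lemma dist_snd_le' {α β : Type*} [PseudoMetricSpace α] [PseudoMetricSpace β] (p q : α × β) :
    dist p.2 q.2 ≤ dist p q := by rw [Prod.dist_eq]; exact le_max_right _ _

lemma normalCone_fixed {n n₁ n₂ m m₁ m₂ : ℕ} {z ν : ZSpace n n₁ n₂ m m₁ m₂}
    (hν : ν ∈ normalCone Kcone z) : projK (z + ν) = z := by
  obtain ⟨hz, hle⟩ := hν
  -- free blocks vanish
  have t1 := hle (z + (ν.1, 0, 0, 0, 0, 0))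
    ⟨fun i => by simpa using hz.1 i, fun i => by simpa using hz.2 i⟩
  have t2 := hle (z + (0, ν.2.1, 0, 0, 0, 0))
    ⟨fun i => by simpa using hz.1 i, fun i => by simpa using hz.2 i⟩
  have t4 := hle (z + (0, 0, 0, ν.2.2.2.1, 0, 0))
    ⟨fun i => by simpa using hz.1 i, fun i => by simpa using hz.2 i⟩
  have t5 := hle (z + (0, 0, 0, 0, ν.2.2.2.2.1, 0))
    ⟨fun i => by simpa using hz.1 i, fun i => by simpa using hz.2 i⟩
  simp only [add_sub_cancel_left, pairZ, dotProduct_zero, zero_dotProduct,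
    add_zero, zero_add] at t1 t2 t4 t5
  have h1 : ν.1 = 0 := dotProduct_self_eq_zero.mp
    (le_antisymm t1 (dotProduct_self_nonneg' _))
  have h2 : ν.2.1 = 0 := dotProduct_self_eq_zero.mp
    (le_antisymm t2 (dotProduct_self_nonneg' _))
  have h4 : ν.2.2.2.1 = 0 := dotProduct_self_eq_zero.mp
    (le_antisymm t4 (dotProduct_self_nonneg' _))
  have h5 : ν.2.2.2.2.1 = 0 := dotProduct_self_eq_zero.mp
    (le_antisymm t5 (dotProduct_self_nonneg' _))
  -- block 3
  have h3le : ∀ i, ν.2.2.1 i ≤ 0 := by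
    intro i
    have t3 := hle (z + (0, 0, Pi.single i 1, 0, 0, 0))
      ⟨fun j => add_nonneg (hz.1 j) (single_nonneg_apply i j),
       fun j => by simpa using hz.2 j⟩
    simp only [add_sub_cancel_left, pairZ, dotProduct_zero, zero_dotProduct,
      add_zero, zero_add, dotProduct_single, mul_one] at t3
    exact t3
  have h3prod : ∀ i, 0 ≤ ν.2.2.1 i * z.2.2.1 i := by
    intro i
    have t3 := hle (z + (0, 0, Pi.single i (-z.2.2.1 i), 0, 0, 0))
      ⟨fun j => by
        show 0 ≤ z.2.2.1 j + (Pi.single i (-z.2.2.1 i) : Vec n₂) j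
        rcases eq_or_ne j i with rfl | hne
        · simp [Pi.single_apply]
        · simpa [Pi.single_apply, hne] using hz.1 j,
       fun j => by simpa using hz.2 j⟩
    simp only [add_sub_cancel_left, pairZ, dotProduct_zero, zero_dotProduct,
      add_zero, zero_add, dotProduct_single] at t3
    nlinarith [t3]
  -- block 6
  have h6le : ∀ i, ν.2.2.2.2.2 i ≤ 0 := by
    intro i
    have t6 := hle (z + (0, 0, 0, 0, 0, Pi.single i 1))
      ⟨fun j => by simpa using hz.1 j,
       fun j => add_nonneg (hz.2 j) (single_nonneg_apply i j)⟩
    simp only [add_sub_cancel_left, pairZ, dotProduct_zero, zero_dotProduct,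
      add_zero, zero_add, dotProduct_single, mul_one] at t6
    exact t6
  have h6prod : ∀ i, 0 ≤ ν.2.2.2.2.2 i * z.2.2.2.2.2 i := by
    intro i
    have t6 := hle (z + (0, 0, 0, 0, 0, Pi.single i (-z.2.2.2.2.2 i)))
      ⟨fun j => by simpa using hz.1 j,
       fun j => by
        show 0 ≤ z.2.2.2.2.2 j + (Pi.single i (-z.2.2.2.2.2 i) : Vec m₂) j
        rcases eq_or_ne j i with rfl | hne
        · simp [Pi.single_apply]
        · simpa [Pi.single_apply, hne] using hz.2 j⟩
    simp only [add_sub_cancel_left, pairZ, dotProduct_zero, zero_dotProduct,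
      add_zero, zero_add, dotProduct_single] at t6
    nlinarith [t6]
  -- assemble
  show ((z + ν).1, (z + ν).2.1, vecPos (z + ν).2.2.1, (z + ν).2.2.2.1,
    (z + ν).2.2.2.2.1, vecPos (z + ν).2.2.2.2.2) = z
  have e1 : (z + ν).1 = z.1 := by rw [Prod.fst_add, h1, add_zero]
  have e3 : vecPos (z + ν).2.2.1 = z.2.2.1 := by
    have : (z + ν).2.2.1 = z.2.2.1 + ν.2.2.1 := rfl
    rw [this]
    exact vecPos_add_eq hz.1 h3le h3prod
  have e6 : vecPos (z + ν).2.2.2.2.2 = z.2.2.2.2.2 := by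
    have : (z + ν).2.2.2.2.2 = z.2.2.2.2.2 + ν.2.2.2.2.2 := rfl
    rw [this]
    exact vecPos_add_eq hz.2 h6le h6prod
  have e2 : (z + ν).2.1 = z.2.1 := by
    show z.2.1 + ν.2.1 = z.2.1
    rw [h2, add_zero]
  have e4 : (z + ν).2.2.2.1 = z.2.2.2.1 := by
    show z.2.2.2.1 + ν.2.2.2.1 = z.2.2.2.1
    rw [h4, add_zero]
  have e5 : (z + ν).2.2.2.2.1 = z.2.2.2.2.1 := by
    show z.2.2.2.2.1 + ν.2.2.2.2.1 = z.2.2.2.2.1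
    rw [h5, add_zero]
  rw [e1, e2, e3, e4, e5, e6]

lemma vecPos_lipschitz {p : ℕ} : LipschitzWith 1 (vecPos : Vec p → Vec p) := by
  apply LipschitzWith.of_dist_le_mul
  intro a b
  rw [NNReal.coe_one, one_mul]
  rw [dist_pi_le_iff dist_nonneg]
  intro i
  calc dist (vecPos a i) (vecPos b i) ≤ dist (a i) (b i) := by
        rw [Real.dist_eq, Real.dist_eq]
        have := abs_max_sub_max_le_abs (a i) (b i) 0
        simpa [vecPos, max_comm] using this
  _ ≤ dist a b := dist_le_pi_dist a b i

lemma projK_lipschitz : LipschitzWith 1 (projK : ZSpace n n₁ n₂ m m₁ m₂ → _) := by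
  apply LipschitzWith.of_dist_le_mul
  intro a b
  rw [NNReal.coe_one, one_mul]
  have d1 : dist a.1 b.1 ≤ dist a b := dist_fst_le' a b
  have d2 : dist a.2.1 b.2.1 ≤ dist a b := (dist_fst_le' a.2 b.2).trans (dist_snd_le' a b)
  have d3 : dist a.2.2.1 b.2.2.1 ≤ dist a b :=
    (dist_fst_le' a.2.2 b.2.2).trans ((dist_snd_le' a.2 b.2).trans (dist_snd_le' a b))
  have d4 : dist a.2.2.2.1 b.2.2.2.1 ≤ dist a b :=
    (dist_fst_le' a.2.2.2 b.2.2.2).trans (((dist_snd_le' a.2.2 b.2.2).trans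
      (dist_snd_le' a.2 b.2)).trans (dist_snd_le' a b))
  have d5 : dist a.2.2.2.2.1 b.2.2.2.2.1 ≤ dist a b :=
    (dist_fst_le' a.2.2.2.2 b.2.2.2.2).trans ((((dist_snd_le' a.2.2.2 b.2.2.2).trans
      (dist_snd_le' a.2.2 b.2.2)).trans (dist_snd_le' a.2 b.2)).trans (dist_snd_le' a b))
  have d6 : dist a.2.2.2.2.2 b.2.2.2.2.2 ≤ dist a b :=
    ((((dist_snd_le' a.2.2.2.2 b.2.2.2.2).trans (dist_snd_le' a.2.2.2 b.2.2.2)).trans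
      (dist_snd_le' a.2.2 b.2.2)).trans (dist_snd_le' a.2 b.2)).trans (dist_snd_le' a b)
  have hv3 : dist (vecPos a.2.2.1) (vecPos b.2.2.1) ≤ dist a b :=
    le_trans (by simpa using vecPos_lipschitz.dist_le_mul a.2.2.1 b.2.2.1) d3
  have hv6 : dist (vecPos a.2.2.2.2.2) (vecPos b.2.2.2.2.2) ≤ dist a b :=
    le_trans (by simpa using vecPos_lipschitz.dist_le_mul a.2.2.2.2.2 b.2.2.2.2.2) d6
  show dist (projK a) (projK b) ≤ dist a b
  rw [projK, projK, Prod.dist_eq, Prod.dist_eq, Prod.dist_eq, Prod.dist_eq, Prod.dist_eq]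
  exact max_le d1 (max_le d2 (max_le hv3 (max_le d4 (max_le d5 hv6))))

-- Minty correspondence helpers
lemma flin_solves {lin : ZSpace n n₁ n₂ m m₁ m₂ → ZSpace n n₁ n₂ m m₁ m₂}
    {ζ η : ZSpace n n₁ n₂ m m₁ m₂}
    (hζ : lin (projK ζ) + (ζ - projK ζ) = η) :
    η - lin (projK ζ) ∈ normalCone Kcone (projK ζ) ∧
      ζ = projK ζ + (η - lin (projK ζ)) := by
  have h : η - lin (projK ζ) = ζ - projK ζ := by rw [← hζ]; abel
  constructor
  · rw [h]; exact sub_projK_mem ζ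
  · rw [h]; abel

lemma flin_of_solution {lin : ZSpace n n₁ n₂ m m₁ m₂ → ZSpace n n₁ n₂ m m₁ m₂}
    {z η : ZSpace n n₁ n₂ m m₁ m₂}
    (hν : η - lin z ∈ normalCone Kcone z) :
    projK (z + (η - lin z)) = z ∧
      lin (projK (z + (η - lin z)))
        + ((z + (η - lin z)) - projK (z + (η - lin z))) = η := by
  have hp := normalCone_fixed hν
  refine ⟨hp, ?_⟩
  rw [hp]
  abel

end Proj

section Smooth

variable {n m n₁ n₂ m₁ m₂ : ℕ}

lemma lag_partial_x (f : Vec n → Vec m → ℝ) (h : Vec n → Vec m → Vec m₁)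
    (g : Vec n → Vec m → Vec m₂) (p : Vec n × Vec m)
    (hfd : DifferentiableAt ℝ (fun q : Vec n × Vec m => f q.1 q.2) p)
    (hhd : ∀ j, DifferentiableAt ℝ (fun q : Vec n × Vec m => h q.1 q.2 j) p)
    (hgd : ∀ k, DifferentiableAt ℝ (fun q : Vec n × Vec m => g q.1 q.2 k) p)
    (μ : Vec m₁) (lam : Vec m₂) (i : Fin n) :
    gradX f h g p.1 p.2 μ lam i =
      fderiv ℝ (fun q : Vec n × Vec m => f q.1 q.2) p (Pi.single i 1, 0)
      + ∑ j, μ j * fderiv ℝ (fun q : Vec n × Vec m => h q.1 q.2 j) p (Pi.single i 1, 0)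
      - ∑ k, lam k * fderiv ℝ (fun q : Vec n × Vec m => g q.1 q.2 k) p (Pi.single i 1, 0) := by
  set inc : Vec n →L[ℝ] Vec n × Vec m := (ContinuousLinearMap.id ℝ (Vec n)).prod 0 with hincdef
  have hinc : HasFDerivAt (fun x' : Vec n => (x', p.2)) inc p.1 :=
    (hasFDerivAt_id p.1).prodMk (hasFDerivAt_const p.2 p.1)
  have hcf : HasFDerivAt (fun x' => f x' p.2)
      ((fderiv ℝ (fun q : Vec n × Vec m => f q.1 q.2) p).comp inc) p.1 :=
    by have := (hfd.hasFDerivAt).comp p.1 hinc; exact this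
  have hch : ∀ j, HasFDerivAt (fun x' => h x' p.2 j)
      ((fderiv ℝ (fun q : Vec n × Vec m => h q.1 q.2 j) p).comp inc) p.1 :=
    fun j => by have := ((hhd j).hasFDerivAt).comp p.1 hinc; exact this
  have hcg : ∀ k, HasFDerivAt (fun x' => g x' p.2 k)
      ((fderiv ℝ (fun q : Vec n × Vec m => g q.1 q.2 k) p).comp inc) p.1 :=
    fun k => by have := ((hgd k).hasFDerivAt).comp p.1 hinc; exact this
  have hLag : HasFDerivAt (fun x' => Lag f h g x' p.2 μ lam)
      (((fderiv ℝ (fun q : Vec n × Vec m => f q.1 q.2) p).comp inc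
        + ∑ j, μ j • ((fderiv ℝ (fun q : Vec n × Vec m => h q.1 q.2 j) p).comp inc))
        - ∑ k, lam k • ((fderiv ℝ (fun q : Vec n × Vec m => g q.1 q.2 k) p).comp inc)) p.1 := by
    apply HasFDerivAt.sub
    · apply HasFDerivAt.add hcf
      exact HasFDerivAt.fun_sum (fun j _ => (hch j).const_mul (μ j))
    · exact HasFDerivAt.fun_sum (fun k _ => (hcg k).const_mul (lam k))
  have hfder : gradX f h g p.1 p.2 μ lam i
      = (((fderiv ℝ (fun q : Vec n × Vec m => f q.1 q.2) p).comp inc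
        + ∑ j, μ j • ((fderiv ℝ (fun q : Vec n × Vec m => h q.1 q.2 j) p).comp inc))
        - ∑ k, lam k • ((fderiv ℝ (fun q : Vec n × Vec m => g q.1 q.2 k) p).comp inc))
        (Pi.single i 1) := by
    show fderiv ℝ (fun x' => Lag f h g x' p.2 μ lam) p.1 (Pi.single i 1) = _
    rw [hLag.fderiv]
  rw [hfder]
  simp [ContinuousLinearMap.sub_apply, ContinuousLinearMap.add_apply,
    ContinuousLinearMap.coe_sum', Finset.sum_apply, ContinuousLinearMap.smul_apply,
    ContinuousLinearMap.comp_apply, hincdef, ContinuousLinearMap.prod_apply,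
    smul_eq_mul]

lemma lag_partial_y (f : Vec n → Vec m → ℝ) (h : Vec n → Vec m → Vec m₁)
    (g : Vec n → Vec m → Vec m₂) (p : Vec n × Vec m)
    (hfd : DifferentiableAt ℝ (fun q : Vec n × Vec m => f q.1 q.2) p)
    (hhd : ∀ j, DifferentiableAt ℝ (fun q : Vec n × Vec m => h q.1 q.2 j) p)
    (hgd : ∀ k, DifferentiableAt ℝ (fun q : Vec n × Vec m => g q.1 q.2 k) p)
    (μ : Vec m₁) (lam : Vec m₂) (i : Fin m) :
    gradY f h g p.1 p.2 μ lam i =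
      fderiv ℝ (fun q : Vec n × Vec m => f q.1 q.2) p (0, Pi.single i 1)
      + ∑ j, μ j * fderiv ℝ (fun q : Vec n × Vec m => h q.1 q.2 j) p (0, Pi.single i 1)
      - ∑ k, lam k * fderiv ℝ (fun q : Vec n × Vec m => g q.1 q.2 k) p (0, Pi.single i 1) := by
  set inc : Vec m →L[ℝ] Vec n × Vec m :=
    (0 : Vec m →L[ℝ] Vec n).prod (ContinuousLinearMap.id ℝ (Vec m)) with hincdef
  have hinc : HasFDerivAt (fun y' : Vec m => (p.1, y')) inc p.2 :=
    (hasFDerivAt_const p.1 p.2).prodMk (hasFDerivAt_id p.2)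
  have hcf : HasFDerivAt (fun y' => f p.1 y')
      ((fderiv ℝ (fun q : Vec n × Vec m => f q.1 q.2) p).comp inc) p.2 :=
    by have := (hfd.hasFDerivAt).comp p.2 hinc; exact this
  have hch : ∀ j, HasFDerivAt (fun y' => h p.1 y' j)
      ((fderiv ℝ (fun q : Vec n × Vec m => h q.1 q.2 j) p).comp inc) p.2 :=
    fun j => by have := ((hhd j).hasFDerivAt).comp p.2 hinc; exact this
  have hcg : ∀ k, HasFDerivAt (fun y' => g p.1 y' k)
      ((fderiv ℝ (fun q : Vec n × Vec m => g q.1 q.2 k) p).comp inc) p.2 :=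
    fun k => by have := ((hgd k).hasFDerivAt).comp p.2 hinc; exact this
  have hLag : HasFDerivAt (fun y' => Lag f h g p.1 y' μ lam)
      (((fderiv ℝ (fun q : Vec n × Vec m => f q.1 q.2) p).comp inc
        + ∑ j, μ j • ((fderiv ℝ (fun q : Vec n × Vec m => h q.1 q.2 j) p).comp inc))
        - ∑ k, lam k • ((fderiv ℝ (fun q : Vec n × Vec m => g q.1 q.2 k) p).comp inc)) p.2 := by
    apply HasFDerivAt.sub
    · apply HasFDerivAt.add hcf
      exact HasFDerivAt.fun_sum (fun j _ => (hch j).const_mul (μ j))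
    · exact HasFDerivAt.fun_sum (fun k _ => (hcg k).const_mul (lam k))
  have hfder : gradY f h g p.1 p.2 μ lam i
      = (((fderiv ℝ (fun q : Vec n × Vec m => f q.1 q.2) p).comp inc
        + ∑ j, μ j • ((fderiv ℝ (fun q : Vec n × Vec m => h q.1 q.2 j) p).comp inc))
        - ∑ k, lam k • ((fderiv ℝ (fun q : Vec n × Vec m => g q.1 q.2 k) p).comp inc))
        (Pi.single i 1) := by
    show fderiv ℝ (fun y' => Lag f h g p.1 y' μ lam) p.2 (Pi.single i 1) = _
    rw [hLag.fderiv]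
  rw [hfder]
  simp [ContinuousLinearMap.sub_apply, ContinuousLinearMap.add_apply,
    ContinuousLinearMap.coe_sum', Finset.sum_apply, ContinuousLinearMap.smul_apply,
    ContinuousLinearMap.comp_apply, hincdef, ContinuousLinearMap.prod_apply,
    smul_eq_mul]

theorem hmap_contDiffAt (f : Vec n → Vec m → ℝ) (h : Vec n → Vec m → Vec m₁)
    (g : Vec n → Vec m → Vec m₂) (H : Vec n → Vec n₁) (G : Vec n → Vec n₂)
    (xs : Vec n) (us : Vec n₁) (vs : Vec n₂) (ys : Vec m) (μs : Vec m₁) (lams : Vec m₂)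
    (hf : ContDiffAt ℝ 2 (fun p : Vec n × Vec m => f p.1 p.2) (xs, ys))
    (hh : ContDiffAt ℝ 2 (fun p : Vec n × Vec m => h p.1 p.2) (xs, ys))
    (hg : ContDiffAt ℝ 2 (fun p : Vec n × Vec m => g p.1 p.2) (xs, ys))
    (hH : ContDiffAt ℝ 2 H xs) (hG : ContDiffAt ℝ 2 G xs) :
    ContDiffAt ℝ 1 (Hmap f h g H G) ((xs, us, vs, ys, μs, lams) : ZSpace n n₁ n₂ m m₁ m₂) := by
  have hh2 : ∀ j, ContDiffAt ℝ 2 (fun q : Vec n × Vec m => h q.1 q.2 j) (xs, ys) :=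
    fun j => contDiffAt_pi.1 hh j
  have hg2 : ∀ k, ContDiffAt ℝ 2 (fun q : Vec n × Vec m => g q.1 q.2 k) (xs, ys) :=
    fun k => contDiffAt_pi.1 hg k
  have hH1 : ∀ j, ContDiffAt ℝ 2 (fun x => H x j) xs := fun j => contDiffAt_pi.1 hH j
  have hG1 : ∀ k, ContDiffAt ℝ 2 (fun x => G x k) xs := fun k => contDiffAt_pi.1 hG k
  -- eventual differentiability near (xs, ys)
  have hev : ∀ᶠ p in nhds (xs, ys),
      DifferentiableAt ℝ (fun q : Vec n × Vec m => f q.1 q.2) p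
      ∧ (∀ j, DifferentiableAt ℝ (fun q : Vec n × Vec m => h q.1 q.2 j) p)
      ∧ (∀ k, DifferentiableAt ℝ (fun q : Vec n × Vec m => g q.1 q.2 k) p) := by
    have e1 := hf.eventually (by norm_num)
    have e2 : ∀ᶠ p in nhds (xs, ys),
        ∀ j, ContDiffAt ℝ 2 (fun q : Vec n × Vec m => h q.1 q.2 j) p :=
      Filter.eventually_all.2 fun j => (hh2 j).eventually (by norm_num)
    have e3 : ∀ᶠ p in nhds (xs, ys),
        ∀ k, ContDiffAt ℝ 2 (fun q : Vec n × Vec m => g q.1 q.2 k) p :=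
      Filter.eventually_all.2 fun k => (hg2 k).eventually (by norm_num)
    filter_upwards [e1, e2, e3] with p p1 p2 p3
    exact ⟨p1.differentiableAt (by norm_num),
      fun j => (p2 j).differentiableAt (by norm_num),
      fun k => (p3 k).differentiableAt (by norm_num)⟩
  -- the nice formula
  set Φn : ZSpace n n₁ n₂ m m₁ m₂ → ZSpace n n₁ n₂ m m₁ m₂ := fun z =>
    ((fun i => fderiv ℝ (fun q : Vec n × Vec m => f q.1 q.2) (z.1, z.2.2.2.1) (Pi.single i 1, 0)
        + ∑ j, z.2.2.2.2.1 j *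
            fderiv ℝ (fun q : Vec n × Vec m => h q.1 q.2 j) (z.1, z.2.2.2.1) (Pi.single i 1, 0)
        - ∑ k, z.2.2.2.2.2 k *
            fderiv ℝ (fun q : Vec n × Vec m => g q.1 q.2 k) (z.1, z.2.2.2.1) (Pi.single i 1, 0)
        + ∑ j, z.2.1 j * fderiv ℝ (fun x => H x j) z.1 (Pi.single i 1)
        + ∑ k, z.2.2.1 k * fderiv ℝ (fun x => G x k) z.1 (Pi.single i 1)),
      H z.1,
      -G z.1,
      (fun i => fderiv ℝ (fun q : Vec n × Vec m => f q.1 q.2) (z.1, z.2.2.2.1) (0, Pi.single i 1)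
        + ∑ j, z.2.2.2.2.1 j *
            fderiv ℝ (fun q : Vec n × Vec m => h q.1 q.2 j) (z.1, z.2.2.2.1) (0, Pi.single i 1)
        - ∑ k, z.2.2.2.2.2 k *
            fderiv ℝ (fun q : Vec n × Vec m => g q.1 q.2 k) (z.1, z.2.2.2.1) (0, Pi.single i 1)),
      h z.1 z.2.2.2.1,
      -g z.1 z.2.2.2.1) with hΦndef
  -- eventual equality
  have hcxy : Continuous (fun z : ZSpace n n₁ n₂ m m₁ m₂ => (z.1, z.2.2.2.1)) := by fun_prop
  have hpull : ∀ᶠ z : ZSpace n n₁ n₂ m m₁ m₂ in nhds (xs, us, vs, ys, μs, lams),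
      DifferentiableAt ℝ (fun q : Vec n × Vec m => f q.1 q.2) (z.1, z.2.2.2.1)
      ∧ (∀ j, DifferentiableAt ℝ (fun q : Vec n × Vec m => h q.1 q.2 j) (z.1, z.2.2.2.1))
      ∧ (∀ k, DifferentiableAt ℝ (fun q : Vec n × Vec m => g q.1 q.2 k) (z.1, z.2.2.2.1)) :=
    (hcxy.continuousAt (x := (xs, us, vs, ys, μs, lams))).tendsto.eventually hev
  have heq : Hmap f h g H G =ᶠ[nhds ((xs, us, vs, ys, μs, lams) : ZSpace n n₁ n₂ m m₁ m₂)] Φn := by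
    filter_upwards [hpull] with z hz
    obtain ⟨hz1, hz2, hz3⟩ := hz
    have hb1 : gradX f h g z.1 z.2.2.2.1 z.2.2.2.2.1 z.2.2.2.2.2
        + (jac H z.1)ᵀ *ᵥ z.2.1 + (jac G z.1)ᵀ *ᵥ z.2.2.1 = (Φn z).1 := by
      funext i
      have hgx := lag_partial_x f h g (z.1, z.2.2.2.1) hz1 hz2 hz3 z.2.2.2.2.1 z.2.2.2.2.2 i
      have hjH : ((jac H z.1)ᵀ *ᵥ z.2.1) i
          = ∑ j, z.2.1 j * fderiv ℝ (fun x => H x j) z.1 (Pi.single i 1) := by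
        simp [Matrix.mulVec, dotProduct, Matrix.transpose_apply, jac, mul_comm]
      have hjG : ((jac G z.1)ᵀ *ᵥ z.2.2.1) i
          = ∑ k, z.2.2.1 k * fderiv ℝ (fun x => G x k) z.1 (Pi.single i 1) := by
        simp [Matrix.mulVec, dotProduct, Matrix.transpose_apply, jac, mul_comm]
      show gradX f h g z.1 z.2.2.2.1 z.2.2.2.2.1 z.2.2.2.2.2 i
        + ((jac H z.1)ᵀ *ᵥ z.2.1) i + ((jac G z.1)ᵀ *ᵥ z.2.2.1) i = _
      rw [hgx, hjH, hjG]
    have hb4 : gradY f h g z.1 z.2.2.2.1 z.2.2.2.2.1 z.2.2.2.2.2 = (Φn z).2.2.2.1 := by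
      funext i
      exact lag_partial_y f h g (z.1, z.2.2.2.1) hz1 hz2 hz3 z.2.2.2.2.1 z.2.2.2.2.2 i
    show (gradX f h g z.1 z.2.2.2.1 z.2.2.2.2.1 z.2.2.2.2.2
        + (jac H z.1)ᵀ *ᵥ z.2.1 + (jac G z.1)ᵀ *ᵥ z.2.2.1,
      H z.1, -G z.1, gradY f h g z.1 z.2.2.2.1 z.2.2.2.2.1 z.2.2.2.2.2,
      h z.1 z.2.2.2.1, -g z.1 z.2.2.2.1) = Φn z
    rw [hb1, hb4]
  -- smoothness of the nice formula
  have cx : ContDiff ℝ 1 (fun z : ZSpace n n₁ n₂ m m₁ m₂ => z.1) := contDiff_fst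
  have cu : ContDiff ℝ 1 (fun z : ZSpace n n₁ n₂ m m₁ m₂ => z.2.1) :=
    contDiff_fst.comp contDiff_snd
  have cv : ContDiff ℝ 1 (fun z : ZSpace n n₁ n₂ m m₁ m₂ => z.2.2.1) :=
    contDiff_fst.comp (contDiff_snd.comp contDiff_snd)
  have cy : ContDiff ℝ 1 (fun z : ZSpace n n₁ n₂ m m₁ m₂ => z.2.2.2.1) :=
    contDiff_fst.comp (contDiff_snd.comp (contDiff_snd.comp contDiff_snd))
  have cμ : ContDiff ℝ 1 (fun z : ZSpace n n₁ n₂ m m₁ m₂ => z.2.2.2.2.1) :=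
    contDiff_fst.comp (contDiff_snd.comp (contDiff_snd.comp (contDiff_snd.comp contDiff_snd)))
  have clam : ContDiff ℝ 1 (fun z : ZSpace n n₁ n₂ m m₁ m₂ => z.2.2.2.2.2) :=
    contDiff_snd.comp (contDiff_snd.comp (contDiff_snd.comp (contDiff_snd.comp contDiff_snd)))
  have cxy : ContDiff ℝ 1 (fun z : ZSpace n n₁ n₂ m m₁ m₂ => (z.1, z.2.2.2.1)) := cx.prodMk cy
  set zs : ZSpace n n₁ n₂ m m₁ m₂ := (xs, us, vs, ys, μs, lams) with hzsdef
  have hDf : ContDiffAt ℝ 1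
      (fun z : ZSpace n n₁ n₂ m m₁ m₂ =>
        fderiv ℝ (fun q : Vec n × Vec m => f q.1 q.2) (z.1, z.2.2.2.1)) zs :=
    ContDiffAt.comp zs (hf.fderiv_right (by norm_num)) cxy.contDiffAt
  have hDh : ∀ j, ContDiffAt ℝ 1
      (fun z : ZSpace n n₁ n₂ m m₁ m₂ =>
        fderiv ℝ (fun q : Vec n × Vec m => h q.1 q.2 j) (z.1, z.2.2.2.1)) zs :=
    fun j => ContDiffAt.comp zs ((hh2 j).fderiv_right (by norm_num)) cxy.contDiffAt
  have hDg : ∀ k, ContDiffAt ℝ 1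
      (fun z : ZSpace n n₁ n₂ m m₁ m₂ =>
        fderiv ℝ (fun q : Vec n × Vec m => g q.1 q.2 k) (z.1, z.2.2.2.1)) zs :=
    fun k => ContDiffAt.comp zs ((hg2 k).fderiv_right (by norm_num)) cxy.contDiffAt
  have hDH : ∀ j, ContDiffAt ℝ 1
      (fun z : ZSpace n n₁ n₂ m m₁ m₂ => fderiv ℝ (fun x => H x j) z.1) zs :=
    fun j => ContDiffAt.comp zs ((hH1 j).fderiv_right (by norm_num)) cx.contDiffAt
  have hDG : ∀ k, ContDiffAt ℝ 1
      (fun z : ZSpace n n₁ n₂ m m₁ m₂ => fderiv ℝ (fun x => G x k) z.1) zs :=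
    fun k => ContDiffAt.comp zs ((hG1 k).fderiv_right (by norm_num)) cx.contDiffAt
  have hμj : ∀ j, ContDiffAt ℝ 1 (fun z : ZSpace n n₁ n₂ m m₁ m₂ => z.2.2.2.2.1 j) zs :=
    fun j => ((ContinuousLinearMap.proj (R := ℝ) (φ := fun _ : Fin m₁ => ℝ) j).contDiff.comp
      cμ).contDiffAt
  have hlamk : ∀ k, ContDiffAt ℝ 1 (fun z : ZSpace n n₁ n₂ m m₁ m₂ => z.2.2.2.2.2 k) zs :=
    fun k => ((ContinuousLinearMap.proj (R := ℝ) (φ := fun _ : Fin m₂ => ℝ) k).contDiff.comp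
      clam).contDiffAt
  have huj : ∀ j, ContDiffAt ℝ 1 (fun z : ZSpace n n₁ n₂ m m₁ m₂ => z.2.1 j) zs :=
    fun j => ((ContinuousLinearMap.proj (R := ℝ) (φ := fun _ : Fin n₁ => ℝ) j).contDiff.comp
      cu).contDiffAt
  have hvk : ∀ k, ContDiffAt ℝ 1 (fun z : ZSpace n n₁ n₂ m m₁ m₂ => z.2.2.1 k) zs :=
    fun k => ((ContinuousLinearMap.proj (R := ℝ) (φ := fun _ : Fin n₂ => ℝ) k).contDiff.comp
      cv).contDiffAt
  have hb1 : ContDiffAt ℝ 1 (fun z => (Φn z).1) zs := by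
    apply contDiffAt_pi.2
    intro i
    apply ContDiffAt.add
    apply ContDiffAt.add
    apply ContDiffAt.sub
    · exact ContDiffAt.add ((hDf).clm_apply contDiffAt_const)
        (ContDiffAt.sum fun j _ => (hμj j).mul ((hDh j).clm_apply contDiffAt_const))
    · exact ContDiffAt.sum fun k _ => (hlamk k).mul ((hDg k).clm_apply contDiffAt_const)
    · exact ContDiffAt.sum fun j _ => (huj j).mul ((hDH j).clm_apply contDiffAt_const)
    · exact ContDiffAt.sum fun k _ => (hvk k).mul ((hDG k).clm_apply contDiffAt_const)
  have hb4 : ContDiffAt ℝ 1 (fun z => (Φn z).2.2.2.1) zs := by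
    apply contDiffAt_pi.2
    intro i
    apply ContDiffAt.sub
    · exact ContDiffAt.add ((hDf).clm_apply contDiffAt_const)
        (ContDiffAt.sum fun j _ => (hμj j).mul ((hDh j).clm_apply contDiffAt_const))
    · exact ContDiffAt.sum fun k _ => (hlamk k).mul ((hDg k).clm_apply contDiffAt_const)
  have hb2 : ContDiffAt ℝ 1 (fun z : ZSpace n n₁ n₂ m m₁ m₂ => H z.1) zs :=
    ContDiffAt.comp zs (hH.of_le (by norm_num)) cx.contDiffAt
  have hb3 : ContDiffAt ℝ 1 (fun z : ZSpace n n₁ n₂ m m₁ m₂ => -G z.1) zs :=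
    (ContDiffAt.comp zs (hG.of_le (by norm_num)) cx.contDiffAt).neg
  have hb5 : ContDiffAt ℝ 1 (fun z : ZSpace n n₁ n₂ m m₁ m₂ => h z.1 z.2.2.2.1) zs :=
    by have := ContDiffAt.comp zs (hh.of_le (by norm_num)) cxy.contDiffAt; exact this
  have hb6 : ContDiffAt ℝ 1 (fun z : ZSpace n n₁ n₂ m m₁ m₂ => -g z.1 z.2.2.2.1) zs :=
    (ContDiffAt.comp zs (hg.of_le (by norm_num)) cxy.contDiffAt).neg
  have hΦn : ContDiffAt ℝ 1 Φn zs :=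
    hb1.prodMk (hb2.prodMk (hb3.prodMk (hb4.prodMk (hb5.prodMk hb6))))
  exact hΦn.congr_of_eventuallyEq heq

end Smooth

section Kojima

variable {n m n₁ n₂ m₁ m₂ : ℕ}

/-- Sign flip of the third block. -/
def negThird (w : ZSpace n n₁ n₂ m m₁ m₂) : ZSpace n n₁ n₂ m m₁ m₂ :=
  (w.1, w.2.1, -w.2.2.1, w.2.2.2.1, w.2.2.2.2.1, w.2.2.2.2.2)

lemma negThird_invol (w : ZSpace n n₁ n₂ m m₁ m₂) : negThird (negThird w) = w := by
  show (w.1, w.2.1, - -w.2.2.1, w.2.2.2.1, w.2.2.2.2.1, w.2.2.2.2.2) = w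
  rw [neg_neg]

lemma negThird_lipschitz : LipschitzWith 1 (negThird : ZSpace n n₁ n₂ m m₁ m₂ → _) := by
  apply LipschitzWith.of_dist_le_mul
  intro a b
  rw [NNReal.coe_one, one_mul]
  have e : dist (negThird a) (negThird b)
      = max (dist a.1 b.1) (max (dist a.2.1 b.2.1) (max (dist (-a.2.2.1) (-b.2.2.1))
        (max (dist a.2.2.2.1 b.2.2.2.1) (max (dist a.2.2.2.2.1 b.2.2.2.2.1)
          (dist a.2.2.2.2.2 b.2.2.2.2.2))))) := rfl
  rw [e, dist_neg_neg]
  exact le_of_eq rfl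

lemma vec_sub_vecPos {p : ℕ} (w : Vec p) : w - vecPos w = vecNeg w := by
  funext i
  show w i - max 0 (w i) = min 0 (w i)
  rcases le_total 0 (w i) with hw | hw
  · rw [max_eq_right hw, min_eq_left hw, sub_self]
  · rw [max_eq_left hw, min_eq_right hw, sub_zero]

lemma sub_projK_eq (ζ : ZSpace n n₁ n₂ m m₁ m₂) :
    ζ - projK ζ = ((0 : Vec n), (0 : Vec n₁), vecNeg ζ.2.2.1, (0 : Vec m), (0 : Vec m₁),
      vecNeg ζ.2.2.2.2.2) := by
  refine Prod.ext ?_ (Prod.ext ?_ (Prod.ext ?_ (Prod.ext ?_ (Prod.ext ?_ ?_))))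
  · show ζ.1 - ζ.1 = 0
    rw [sub_self]
  · show ζ.2.1 - ζ.2.1 = 0
    rw [sub_self]
  · show ζ.2.2.1 - vecPos ζ.2.2.1 = vecNeg ζ.2.2.1
    exact vec_sub_vecPos _
  · show ζ.2.2.2.1 - ζ.2.2.2.1 = 0
    rw [sub_self]
  · show ζ.2.2.2.2.1 - ζ.2.2.2.2.1 = 0
    rw [sub_self]
  · show ζ.2.2.2.2.2 - vecPos ζ.2.2.2.2.2 = vecNeg ζ.2.2.2.2.2
    exact vec_sub_vecPos _

lemma kojima_eq_negThird_nor (f : Vec n → Vec m → ℝ) (h : Vec n → Vec m → Vec m₁)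
    (g : Vec n → Vec m → Vec m₂) (H : Vec n → Vec n₁) (G : Vec n → Vec n₂) :
    Kojima f h g H G =
      fun ζ => negThird (Hmap f h g H G (projK ζ) + (ζ - projK ζ)) := by
  funext ζ
  rw [sub_projK_eq]
  refine Prod.ext ?_ (Prod.ext ?_ (Prod.ext ?_ (Prod.ext ?_ (Prod.ext ?_ ?_))))
  · show gradX f h g ζ.1 ζ.2.2.2.1 ζ.2.2.2.2.1 (vecPos ζ.2.2.2.2.2)
        + (jac H ζ.1)ᵀ *ᵥ ζ.2.1 + (jac G ζ.1)ᵀ *ᵥ vecPos ζ.2.2.1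
      = (gradX f h g ζ.1 ζ.2.2.2.1 ζ.2.2.2.2.1 (vecPos ζ.2.2.2.2.2)
        + (jac H ζ.1)ᵀ *ᵥ ζ.2.1 + (jac G ζ.1)ᵀ *ᵥ vecPos ζ.2.2.1) + 0
    rw [add_zero]
  · show H ζ.1 = H ζ.1 + 0
    rw [add_zero]
  · show G ζ.1 - vecNeg ζ.2.2.1 = -(-G ζ.1 + vecNeg ζ.2.2.1)
    abel
  · show gradY f h g ζ.1 ζ.2.2.2.1 ζ.2.2.2.2.1 (vecPos ζ.2.2.2.2.2)
      = gradY f h g ζ.1 ζ.2.2.2.1 ζ.2.2.2.2.1 (vecPos ζ.2.2.2.2.2) + 0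
    rw [add_zero]
  · show h ζ.1 ζ.2.2.2.1 = h ζ.1 ζ.2.2.2.1 + 0
    rw [add_zero]
  · show -g ζ.1 ζ.2.2.2.1 + vecNeg ζ.2.2.2.2.2 = -g ζ.1 ζ.2.2.2.1 + vecNeg ζ.2.2.2.2.2
    rfl

lemma vecPos_add_of_compl {p : ℕ} {v w : Vec p} (hv : ∀ i, 0 ≤ v i) (hw : ∀ i, w i ≤ 0)
    (hc : ∀ i, v i * w i = 0) : vecPos (v + w) = v := by
  funext i
  show max 0 (v i + w i) = v i
  rcases mul_eq_zero.mp (hc i) with h0 | h0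
  · rw [h0, zero_add]
    exact max_eq_left (hw i)
  · rw [h0, add_zero]
    exact max_eq_right (hv i)

end Kojima

section MintyMain

variable {n m n₁ n₂ m₁ m₂ : ℕ}

/-- Normal map of the linearized generalized equation. -/
def FlinMap (κ : ZSpace n n₁ n₂ m m₁ m₂)
    (A : ZSpace n n₁ n₂ m m₁ m₂ →L[ℝ] ZSpace n n₁ n₂ m m₁ m₂)
    (zs : ZSpace n n₁ n₂ m m₁ m₂) : ZSpace n n₁ n₂ m m₁ m₂ → ZSpace n n₁ n₂ m m₁ m₂ :=
  fun ζ => (κ + A (projK ζ - zs)) + (ζ - projK ζ)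

lemma projK_dist_le (a b : ZSpace n n₁ n₂ m m₁ m₂) : dist (projK a) (projK b) ≤ dist a b := by
  have := projK_lipschitz.dist_le_mul a b
  simpa using this

lemma flinMap_lip (κ : ZSpace n n₁ n₂ m m₁ m₂)
    (A : ZSpace n n₁ n₂ m m₁ m₂ →L[ℝ] ZSpace n n₁ n₂ m m₁ m₂)
    (zs : ZSpace n n₁ n₂ m m₁ m₂) (a b : ZSpace n n₁ n₂ m m₁ m₂) :
    dist (FlinMap κ A zs a) (FlinMap κ A zs b) ≤ (‖A‖ + 2) * dist a b := by
  have e1 : FlinMap κ A zs a - FlinMap κ A zs b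
      = A (projK a - projK b) + ((a - b) - (projK a - projK b)) := by
    show (κ + A (projK a - zs)) + (a - projK a) - ((κ + A (projK b - zs)) + (b - projK b)) = _
    rw [map_sub, map_sub, map_sub]
    abel
  rw [dist_eq_norm, e1]
  have h1 : ‖A (projK a - projK b)‖ ≤ ‖A‖ * ‖projK a - projK b‖ := A.le_opNorm _
  have h2 : ‖projK a - projK b‖ ≤ ‖a - b‖ := by
    rw [← dist_eq_norm, ← dist_eq_norm]; exact projK_dist_le a b
  have h3 : ‖A (projK a - projK b) + ((a - b) - (projK a - projK b))‖
      ≤ ‖A (projK a - projK b)‖ + (‖a - b‖ + ‖projK a - projK b‖) :=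
    (norm_add_le _ _).trans (by linarith [norm_sub_le (a - b) (projK a - projK b)])
  have h4 : (0:ℝ) ≤ ‖A‖ := norm_nonneg _
  have h5 : (0:ℝ) ≤ ‖projK a - projK b‖ := norm_nonneg _
  rw [dist_eq_norm]
  nlinarith

theorem strongRegular_to_locLipHomeo
    (Φm : ZSpace n n₁ n₂ m m₁ m₂ → ZSpace n n₁ n₂ m m₁ m₂)
    (zs ζs : ZSpace n n₁ n₂ m m₁ m₂)
    (A : ZSpace n n₁ n₂ m m₁ m₂ →L[ℝ] ZSpace n n₁ n₂ m m₁ m₂)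
    (hAdef : fderiv ℝ Φm zs = A)
    (hproj : projK ζs = zs) (hzero : Φm zs + (ζs - zs) = 0)
    (hSR : StrongRegular Φm Kcone zs) :
    LocLipHomeo (FlinMap (Φm zs) A zs) ζs := by
  classical
  obtain ⟨δ, hδ, ε, hε, zhat, hmain, L, hL⟩ := hSR
  rw [hAdef] at hmain
  have hnegΦ : -(Φm zs) = ζs - zs := by rw [neg_eq_iff_add_eq_zero]; exact hzero
  have hζz : ζs - zs ∈ normalCone Kcone zs := by
    have := sub_projK_mem ζs; rwa [hproj] at this
  have hz0 : zhat 0 = zs := by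
    obtain ⟨-, -, huniq⟩ := hmain 0 (Metric.mem_closedBall_self hδ.le)
    refine (huniq zs (Metric.mem_closedBall_self hε.le) ?_).symm
    have h1 : (0 : ZSpace n n₁ n₂ m m₁ m₂) - (Φm zs + A (zs - zs)) = ζs - zs := by
      rw [sub_self, map_zero, add_zero, zero_sub, hnegΦ]
    rw [h1]; exact hζz
  set Ψt : ZSpace n n₁ n₂ m m₁ m₂ → ZSpace n n₁ n₂ m m₁ m₂ :=
    fun η => zhat η + (η - (Φm zs + A (zhat η - zs))) with hΨtdef
  have hright : ∀ η ∈ Metric.closedBall (0 : ZSpace n n₁ n₂ m m₁ m₂) δ,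
      FlinMap (Φm zs) A zs (Ψt η) = η ∧ projK (Ψt η) = zhat η := by
    intro η hη
    obtain ⟨hball, hsol, -⟩ := hmain η hη
    have hres := flin_of_solution (lin := fun z => Φm zs + A (z - zs)) (z := zhat η)
      (η := η) hsol
    exact ⟨hres.2, hres.1⟩
  have hΨt0 : Ψt 0 = ζs := by
    show zhat 0 + ((0 : ZSpace n n₁ n₂ m m₁ m₂) - (Φm zs + A (zhat 0 - zs))) = ζs
    rw [hz0, sub_self, map_zero, add_zero, zero_sub, hnegΦ]
    abel
  have hzhatlip : ∀ a ∈ Metric.closedBall (0 : ZSpace n n₁ n₂ m m₁ m₂) δ,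
      ∀ b ∈ Metric.closedBall (0 : ZSpace n n₁ n₂ m m₁ m₂) δ,
      dist (zhat a) (zhat b) ≤ (L : ℝ) * dist a b :=
    lipschitzOnWith_iff_dist_le_mul.mp hL
  set CΨ : ℝ := (L : ℝ) + 1 + ‖A‖ * (L : ℝ) with hCΨdef
  have hCΨ0 : 0 ≤ CΨ := by positivity
  have hΨlip : ∀ a ∈ Metric.closedBall (0 : ZSpace n n₁ n₂ m m₁ m₂) δ,
      ∀ b ∈ Metric.closedBall (0 : ZSpace n n₁ n₂ m m₁ m₂) δ,
      dist (Ψt a) (Ψt b) ≤ CΨ * dist a b := by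
    intro a ha b hb
    have h1 := hzhatlip a ha b hb
    have e1 : Ψt a - Ψt b = (zhat a - zhat b) + ((a - b) - A (zhat a - zhat b)) := by
      show (zhat a + (a - (Φm zs + A (zhat a - zs))))
        - (zhat b + (b - (Φm zs + A (zhat b - zs)))) = _
      rw [map_sub, map_sub, map_sub]
      abel
    rw [dist_eq_norm, e1]
    have h2 : ‖A (zhat a - zhat b)‖ ≤ ‖A‖ * ‖zhat a - zhat b‖ := A.le_opNorm _
    have h3 : ‖zhat a - zhat b‖ ≤ (L:ℝ) * ‖a - b‖ := by
      rw [← dist_eq_norm, ← dist_eq_norm]; exact h1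
    have h4 : ‖(zhat a - zhat b) + ((a - b) - A (zhat a - zhat b))‖
        ≤ ‖zhat a - zhat b‖ + (‖a - b‖ + ‖A (zhat a - zhat b)‖) :=
      (norm_add_le _ _).trans (by linarith [norm_sub_le (a - b) (A (zhat a - zhat b))])
    have h5 : (0:ℝ) ≤ ‖A‖ := norm_nonneg _
    have h6 : (0:ℝ) ≤ ‖zhat a - zhat b‖ := norm_nonneg _
    have h7 : (0:ℝ) ≤ ‖a - b‖ := norm_nonneg _
    rw [dist_eq_norm, hCΨdef]
    nlinarith
  -- radii
  set ρ' : ℝ := min δ (ε / (CΨ + 1)) / 2 with hρ'def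
  have hρ'0 : 0 < ρ' := by
    have : 0 < min δ (ε / (CΨ + 1)) := lt_min hδ (by positivity)
    positivity
  have hρ'δ : ρ' ≤ δ := by
    have : min δ (ε / (CΨ + 1)) ≤ δ := min_le_left _ _
    have h0 : 0 < min δ (ε / (CΨ + 1)) := lt_min hδ (by positivity)
    rw [hρ'def]; linarith
  have hCρ' : CΨ * ρ' < ε := by
    have h1 : ρ' ≤ (ε / (CΨ + 1)) / 2 := by
      have : min δ (ε / (CΨ + 1)) ≤ ε / (CΨ + 1) := min_le_right _ _
      rw [hρ'def]; linarith
    have h2 : CΨ * ρ' ≤ CΨ * ((ε / (CΨ + 1)) / 2) :=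
      mul_le_mul_of_nonneg_left h1 hCΨ0
    have h3 : CΨ * ((ε / (CΨ + 1)) / 2) ≤ ε / 2 := by
      have hpos : (0:ℝ) < CΨ + 1 := by positivity
      have e : CΨ * (ε / (CΨ + 1) / 2) = (CΨ / (CΨ + 1)) * (ε / 2) := by
        field_simp
      rw [e]
      have hle1 : CΨ / (CΨ + 1) ≤ 1 := by
        rw [div_le_one hpos]; linarith
      have := mul_le_mul_of_nonneg_right hle1 (by positivity : (0:ℝ) ≤ ε / 2)
      simpa using this
    calc CΨ * ρ' ≤ CΨ * (ε / (CΨ + 1) / 2) := h2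
    _ ≤ ε / 2 := h3
    _ < ε := half_lt_self hε
  have hFζs : FlinMap (Φm zs) A zs ζs = 0 := by
    show (Φm zs + A (projK ζs - zs)) + (ζs - projK ζs) = 0
    rw [hproj, sub_self, map_zero, add_zero]
    exact hzero
  -- the neighbourhoods
  set V' : Set (ZSpace n n₁ n₂ m m₁ m₂) := Metric.ball 0 ρ' with hV'def
  set U' : Set (ZSpace n n₁ n₂ m m₁ m₂) :=
    Metric.ball ζs ε ∩ FlinMap (Φm zs) A zs ⁻¹' V' with hU'def
  have hFlincont : Continuous (FlinMap (Φm zs) A zs) := by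
    apply LipschitzWith.continuous (K := Real.toNNReal (‖A‖ + 2))
    apply LipschitzWith.of_dist_le_mul
    intro a b
    rw [Real.coe_toNNReal _ (by positivity)]
    exact flinMap_lip _ _ _ a b
  have hU'nhds : U' ∈ nhds ζs := by
    have hopen : IsOpen U' := Metric.isOpen_ball.inter (hFlincont.isOpen_preimage _ Metric.isOpen_ball)
    apply hopen.mem_nhds
    refine ⟨Metric.mem_ball_self hε, ?_⟩
    show FlinMap (Φm zs) A zs ζs ∈ V'
    rw [hFζs]
    exact Metric.mem_ball_self hρ'0
  have hV'sub : V' ⊆ Metric.closedBall (0 : ZSpace n n₁ n₂ m m₁ m₂) δ := fun y hy =>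
    Metric.mem_closedBall.mpr (le_trans (Metric.mem_ball.mp hy).le (by linarith))
  have hmaps' : ∀ η ∈ V', Ψt η ∈ U' := by
    intro η hη
    have hηδ : η ∈ Metric.closedBall (0 : ZSpace n n₁ n₂ m m₁ m₂) δ := hV'sub hη
    obtain ⟨hFΨ, -⟩ := hright η hηδ
    constructor
    · have h1 : dist (Ψt η) ζs ≤ CΨ * dist η 0 := by
        rw [← hΨt0]
        exact hΨlip η hηδ 0 (Metric.mem_closedBall_self hδ.le)
      have h2 : dist η 0 ≤ ρ' := (Metric.mem_ball.mp hη).le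
      have h3 : CΨ * dist η 0 ≤ CΨ * ρ' := mul_le_mul_of_nonneg_left h2 hCΨ0
      exact Metric.mem_ball.mpr (lt_of_le_of_lt (h1.trans h3) hCρ')
    · show FlinMap (Φm zs) A zs (Ψt η) ∈ V'
      rw [hFΨ]; exact hη
  have hlft' : ∀ a ∈ U', Ψt (FlinMap (Φm zs) A zs a) = a := by
    rintro a ⟨haball, haV⟩
    have hηV : FlinMap (Φm zs) A zs a ∈ V' := haV
    have hηδ := hV'sub hηV
    obtain ⟨-, -, huniq⟩ := hmain _ hηδ
    have hsol := flin_solves (lin := fun z => Φm zs + A (z - zs)) (ζ := a)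
      (η := FlinMap (Φm zs) A zs a) rfl
    have hprojball : projK a ∈ Metric.closedBall zs ε := by
      apply Metric.mem_closedBall.mpr
      calc dist (projK a) zs = dist (projK a) (projK ζs) := by rw [hproj]
      _ ≤ dist a ζs := projK_dist_le a ζs
      _ ≤ ε := (Metric.mem_ball.mp haball).le
    have hzu : projK a = zhat (FlinMap (Φm zs) A zs a) := huniq _ hprojball hsol.1
    show zhat (FlinMap (Φm zs) A zs a)
      + ((FlinMap (Φm zs) A zs a) - (Φm zs + A (zhat (FlinMap (Φm zs) A zs a) - zs))) = a
    rw [← hzu]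
    exact hsol.2.symm
  refine ⟨U', hU'nhds, V', ?_, Ψt, ?_, fun η hη => hmaps' η hη, hlft', ?_, ?_, ?_⟩
  · rw [hFζs]; exact Metric.isOpen_ball.mem_nhds (Metric.mem_ball_self hρ'0)
  · apply Set.Subset.antisymm
    · rintro _ ⟨a, ha, rfl⟩; exact ha.2
    · intro η hη
      exact ⟨Ψt η, hmaps' η hη, (hright η (hV'sub hη)).1⟩
  · intro η hη; exact (hright η (hV'sub hη)).1
  · refine ⟨Real.toNNReal (‖A‖ + 2), ?_⟩
    apply lipschitzOnWith_iff_dist_le_mul.mpr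
    intro a _ b _
    rw [Real.coe_toNNReal _ (by positivity)]
    exact flinMap_lip _ _ _ a b
  · refine ⟨Real.toNNReal CΨ, ?_⟩
    apply lipschitzOnWith_iff_dist_le_mul.mpr
    intro a ha b hb
    rw [Real.coe_toNNReal _ hCΨ0]
    exact hΨlip a (hV'sub ha) b (hV'sub hb)

theorem locLipHomeo_to_strongRegular
    (Φm : ZSpace n n₁ n₂ m m₁ m₂ → ZSpace n n₁ n₂ m m₁ m₂)
    (zs ζs : ZSpace n n₁ n₂ m m₁ m₂)
    (A : ZSpace n n₁ n₂ m m₁ m₂ →L[ℝ] ZSpace n n₁ n₂ m m₁ m₂)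
    (hAdef : fderiv ℝ Φm zs = A)
    (hproj : projK ζs = zs) (hzero : Φm zs + (ζs - zs) = 0)
    (hom : LocLipHomeo (FlinMap (Φm zs) A zs) ζs) :
    StrongRegular Φm Kcone zs := by
  classical
  obtain ⟨U, hU, V, hV, Ψ, himg, hmaps, hlft, hrgt, ⟨L₁, hL₁⟩, ⟨L₂, hL₂⟩⟩ := hom
  have hFζs : FlinMap (Φm zs) A zs ζs = 0 := by
    show (Φm zs + A (projK ζs - zs)) + (ζs - projK ζs) = 0
    rw [hproj, sub_self, map_zero, add_zero]
    exact hzero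
  rw [hFζs] at hV
  obtain ⟨rU, hrU, hballU⟩ := Metric.mem_nhds_iff.mp hU
  obtain ⟨ρV, hρV, hballV⟩ := Metric.mem_nhds_iff.mp hV
  have hΨ0 : Ψ 0 = ζs := by
    rw [← hFζs]; exact hlft ζs (mem_of_mem_nhds hU)
  have hLip₂ : ∀ a ∈ V, ∀ b ∈ V, dist (Ψ a) (Ψ b) ≤ (L₂ : ℝ) * dist a b :=
    lipschitzOnWith_iff_dist_le_mul.mp hL₂
  set CA : ℝ := ‖A‖ with hCAdef
  have hCA0 : 0 ≤ CA := norm_nonneg _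
  set ε : ℝ := rU / (2 * (CA + 2)) with hεdef
  have hε : 0 < ε := by positivity
  set δ : ℝ := min (min (ρV / 2) (rU / 4)) (ε / ((L₂ : ℝ) + 1)) with hδdef
  have hδ : 0 < δ := lt_min (lt_min (by positivity) (by positivity)) (by positivity)
  have hδρV : δ ≤ ρV / 2 := le_trans (min_le_left _ _) (min_le_left _ _)
  have hδrU : δ ≤ rU / 4 := le_trans (min_le_left _ _) (min_le_right _ _)
  have hδL : δ ≤ ε / ((L₂ : ℝ) + 1) := min_le_right _ _
  have hδmemV : ∀ η ∈ Metric.closedBall (0 : ZSpace n n₁ n₂ m m₁ m₂) δ, η ∈ V := by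
    intro η hη
    apply hballV
    apply Metric.mem_ball.mpr
    have := Metric.mem_closedBall.mp hη
    linarith
  refine ⟨δ, hδ, ε, hε, fun η => projK (Ψ η), ?_, ⟨L₂, ?_⟩⟩
  · intro η hη
    have hηV : η ∈ V := hδmemV η hη
    have hrgtη : FlinMap (Φm zs) A zs (Ψ η) = η := hrgt η hηV
    have hsol := flin_solves (lin := fun z => Φm zs + A (z - zs)) (ζ := Ψ η) (η := η) hrgtη
    have hballz : projK (Ψ η) ∈ Metric.closedBall zs ε := by
      apply Metric.mem_closedBall.mpr
      have h0V : (0 : ZSpace n n₁ n₂ m m₁ m₂) ∈ V := hballV (Metric.mem_ball_self hρV)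
      calc dist (projK (Ψ η)) zs = dist (projK (Ψ η)) (projK ζs) := by rw [hproj]
      _ ≤ dist (Ψ η) ζs := projK_dist_le _ _
      _ = dist (Ψ η) (Ψ 0) := by rw [hΨ0]
      _ ≤ (L₂ : ℝ) * dist η 0 := hLip₂ η hηV 0 h0V
      _ ≤ (L₂ : ℝ) * δ := mul_le_mul_of_nonneg_left (Metric.mem_closedBall.mp hη) L₂.coe_nonneg
      _ ≤ ε := by
        have h1 : δ * ((L₂ : ℝ) + 1) ≤ ε := (le_div_iff₀ (by positivity)).mp hδL
        nlinarith [L₂.coe_nonneg, hδ.le]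
    refine ⟨hballz, ?_, ?_⟩
    · rw [hAdef]
      exact hsol.1
    · intro z hz hzsol
      rw [hAdef] at hzsol
      have hfs := flin_of_solution (lin := fun zz => Φm zs + A (zz - zs)) (z := z) (η := η) hzsol
      have hFval : FlinMap (Φm zs) A zs (z + (η - (Φm zs + A (z - zs)))) = η := by
        show (Φm zs + A (projK (z + (η - (Φm zs + A (z - zs)))) - zs))
          + ((z + (η - (Φm zs + A (z - zs)))) - projK (z + (η - (Φm zs + A (z - zs))))) = η
        exact hfs.2
      have hζU : z + (η - (Φm zs + A (z - zs))) ∈ U := by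
        apply hballU
        apply Metric.mem_ball.mpr
        have e1 : (z + (η - (Φm zs + A (z - zs)))) - ζs
            = ((z - zs) - A (z - zs) + η) - (Φm zs + (ζs - zs)) := by abel
        have e2 : (z + (η - (Φm zs + A (z - zs)))) - ζs = (z - zs) - A (z - zs) + η := by
          rw [e1, hzero, sub_zero]
        rw [dist_eq_norm, e2]
        have h1 : ‖(z - zs) - A (z - zs) + η‖ ≤ ‖z - zs‖ + ‖A (z - zs)‖ + ‖η‖ := by
          calc ‖(z - zs) - A (z - zs) + η‖ ≤ ‖(z - zs) - A (z - zs)‖ + ‖η‖ := norm_add_le _ _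
          _ ≤ ‖z - zs‖ + ‖A (z - zs)‖ + ‖η‖ := by
              linarith [norm_sub_le (z - zs) (A (z - zs))]
        have h2 : ‖z - zs‖ ≤ ε := by rw [← dist_eq_norm]; exact Metric.mem_closedBall.mp hz
        have h3 : ‖A (z - zs)‖ ≤ CA * ‖z - zs‖ := A.le_opNorm _
        have h4 : ‖η‖ ≤ δ := by
          rw [← dist_zero_right]
          exact Metric.mem_closedBall.mp hη
        have hne : CA + 2 ≠ 0 := by positivity
        have h5 : (CA + 2) * ε = rU / 2 := by
          rw [hεdef]; field_simp
        have h7 : CA * ‖z - zs‖ ≤ CA * ε := mul_le_mul_of_nonneg_left h2 hCA0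
        have h8 : δ ≤ rU / 4 := hδrU
        nlinarith [norm_nonneg η, norm_nonneg (z - zs), hε.le, hrU]
      have hΨF : Ψ (FlinMap (Φm zs) A zs (z + (η - (Φm zs + A (z - zs)))))
          = z + (η - (Φm zs + A (z - zs))) := hlft _ hζU
      rw [hFval] at hΨF
      show z = projK (Ψ η)
      rw [hΨF]
      exact hfs.1.symm
  · apply lipschitzOnWith_iff_dist_le_mul.mpr
    intro a ha b hb
    calc dist (projK (Ψ a)) (projK (Ψ b)) ≤ dist (Ψ a) (Ψ b) := projK_dist_le _ _
    _ ≤ (L₂ : ℝ) * dist a b := hLip₂ a (hδmemV a ha) b (hδmemV b hb)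

end MintyMain

/-- the equivalence (c) ⟺ (d) in Theorem 4.1. Let
`(x*,u*,v*,y*,μ*,λ*)` satisfy the KKT conditions of the constrained minimax problem, with
inner strict complementarity `λ* − g(x*,y*) > 0`. Then the Kojima mapping `F` is a locally
Lipschitz homeomorphism near `(x*,u*,w*,y*,μ*,ξ*)` (with `w* = v* + G(x*)`,
`ξ* = λ* + g(x*,y*)`) if and only if `z* = (x*,u*,v*,y*,μ*,λ*)` is a strongly regular
solution of the generalized equation `0 ∈ 𝓗(z) + N_𝓚(z)`. -/
theorem stmt_12 {n m n₁ n₂ m₁ m₂ : ℕ}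
    (f : Vec n → Vec m → ℝ) (h : Vec n → Vec m → Vec m₁) (g : Vec n → Vec m → Vec m₂)
    (H : Vec n → Vec n₁) (G : Vec n → Vec n₂)
    (xs : Vec n) (us : Vec n₁) (vs : Vec n₂) (ys : Vec m) (μs : Vec m₁) (lams : Vec m₂)
    (hf : ContDiffAt ℝ 2 (fun p : Vec n × Vec m => f p.1 p.2) (xs, ys))
    (hh : ContDiffAt ℝ 2 (fun p : Vec n × Vec m => h p.1 p.2) (xs, ys))
    (hg : ContDiffAt ℝ 2 (fun p : Vec n × Vec m => g p.1 p.2) (xs, ys))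
    (hH : ContDiffAt ℝ 2 H xs) (hG : ContDiffAt ℝ 2 G xs)
    -- KKT conditions of the minimax problem
    (hKKTout : (us, vs) ∈ LambdaSet f h g H G xs ys μs lams)
    (hKKTin : InnerKKT f h g xs ys μs lams)
    -- inner strict complementarity
    (hsc : ∀ i, 0 < lams i - g xs ys i) :
    LocLipHomeo (Kojima f h g H G) (xs, us, vs + G xs, ys, μs, lams + g xs ys) ↔
      StrongRegular (Hmap f h g H G) Kcone (xs, us, vs, ys, μs, lams) := by
  classical
  have hsmooth := hmap_contDiffAt f h g H G xs us vs ys μs lams hf hh hg hH hG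
  have hstrict : HasStrictFDerivAt (Hmap f h g H G)
      (fderiv ℝ (Hmap f h g H G) ((xs, us, vs, ys, μs, lams) : ZSpace n n₁ n₂ m m₁ m₂))
      ((xs, us, vs, ys, μs, lams) : ZSpace n n₁ n₂ m m₁ m₂) :=
    hsmooth.hasStrictFDerivAt one_ne_zero
  set Φm := Hmap f h g H G with hΦm
  set zs : ZSpace n n₁ n₂ m m₁ m₂ := (xs, us, vs, ys, μs, lams) with hzs
  set ζs : ZSpace n n₁ n₂ m m₁ m₂ := (xs, us, vs + G xs, ys, μs, lams + g xs ys) with hζsd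
  set A := fderiv ℝ Φm zs with hA
  obtain ⟨hL1, hL2, hL3, hL4, hL5⟩ := hKKTout
  obtain ⟨hI1, hI2, hI3, hI4, hI5⟩ := hKKTin
  have hproj : projK ζs = zs := by
    show ((xs, us, vecPos (vs + G xs), ys, μs, vecPos (lams + g xs ys))
      : ZSpace n n₁ n₂ m m₁ m₂) = zs
    rw [hzs]
    refine Prod.ext rfl (Prod.ext rfl (Prod.ext ?_ (Prod.ext rfl (Prod.ext rfl ?_))))
    · exact vecPos_add_of_compl hL3 hL4 hL5
    · exact vecPos_add_of_compl hI3 hI4 hI5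
  have hzero : Φm zs + (ζs - zs) = 0 := by
    refine Prod.ext ?_ (Prod.ext ?_ (Prod.ext ?_ (Prod.ext ?_ (Prod.ext ?_ ?_))))
    · show (gradX f h g xs ys μs lams + (jac H xs)ᵀ *ᵥ us + (jac G xs)ᵀ *ᵥ vs)
        + (xs - xs) = 0
      rw [sub_self, add_zero]
      exact hL1
    · show H xs + (us - us) = 0
      rw [sub_self, add_zero]
      exact hL2
    · show -G xs + ((vs + G xs) - vs) = 0
      abel
    · show gradY f h g xs ys μs lams + (ys - ys) = 0
      rw [sub_self, add_zero]
      exact hI1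
    · show h xs ys + (μs - μs) = 0
      rw [sub_self, add_zero]
      exact hI2
    · show -g xs ys + ((lams + g xs ys) - lams) = 0
      abel
  set Fnor : ZSpace n n₁ n₂ m m₁ m₂ → ZSpace n n₁ n₂ m m₁ m₂ :=
    fun ζ => Φm (projK ζ) + (ζ - projK ζ) with hFnor
  have hKeq : Kojima f h g H G = fun ζ => negThird (Fnor ζ) :=
    kojima_eq_negThird_nor f h g H G
  have step1 : LocLipHomeo (Kojima f h g H G) ζs ↔ LocLipHomeo Fnor ζs := by
    constructor
    · intro hl
      have h2 := locLipHomeo_comp_involution negThird negThird_invol negThird_lipschitz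
        (Kojima f h g H G) ζs hl
      have h3 : (fun a => negThird (Kojima f h g H G a)) = Fnor := by
        funext a
        rw [hKeq]
        exact negThird_invol _
      rwa [h3] at h2
    · intro hl
      have h2 := locLipHomeo_comp_involution negThird negThird_invol negThird_lipschitz
        Fnor ζs hl
      rw [hKeq]
      exact h2
  set Flin := FlinMap (Φm zs) A zs with hFlin
  have hδsmall : ∀ c : ℝ, 0 < c → ∃ r > 0, ∀ a ∈ Metric.ball ζs r, ∀ b ∈ Metric.ball ζs r,
      dist (Fnor a - Flin a) (Fnor b - Flin b) ≤ c * dist a b := by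
    intro c hc
    have hev := (Asymptotics.isLittleO_iff.mp hstrict.isLittleO) hc
    obtain ⟨r, hr, hball⟩ := Metric.eventually_nhds_iff_ball.mp hev
    refine ⟨r, hr, ?_⟩
    intro a ha b hb
    have hpa : dist (projK a) zs < r := by
      calc dist (projK a) zs = dist (projK a) (projK ζs) := by rw [hproj]
      _ ≤ dist a ζs := projK_dist_le _ _
      _ < r := Metric.mem_ball.mp ha
    have hpb : dist (projK b) zs < r := by
      calc dist (projK b) zs = dist (projK b) (projK ζs) := by rw [hproj]
      _ ≤ dist b ζs := projK_dist_le _ _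
      _ < r := Metric.mem_ball.mp hb
    have hmem : ((projK a, projK b) : ZSpace n n₁ n₂ m m₁ m₂ × ZSpace n n₁ n₂ m m₁ m₂)
        ∈ Metric.ball ((zs, zs) : ZSpace n n₁ n₂ m m₁ m₂ × ZSpace n n₁ n₂ m m₁ m₂) r := by
      rw [Metric.mem_ball, Prod.dist_eq]
      exact max_lt hpa hpb
    have hest := hball _ hmem
    have e1 : (Fnor a - Flin a) - (Fnor b - Flin b)
        = Φm (projK a) - Φm (projK b) - A (projK a - projK b) := by
      show (Φm (projK a) + (a - projK a) - ((Φm zs + A (projK a - zs)) + (a - projK a)))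
        - (Φm (projK b) + (b - projK b) - ((Φm zs + A (projK b - zs)) + (b - projK b))) = _
      rw [map_sub, map_sub, map_sub]
      abel
    rw [dist_eq_norm, e1]
    refine le_trans hest ?_
    have h2 : ‖projK a - projK b‖ ≤ dist a b := by
      rw [← dist_eq_norm]
      exact projK_dist_le a b
    exact mul_le_mul_of_nonneg_left h2 hc.le
  have hpt : Flin ζs = Fnor ζs := by
    show (Φm zs + A (projK ζs - zs)) + (ζs - projK ζs) = Φm (projK ζs) + (ζs - projK ζs)
    rw [hproj, sub_self, map_zero, add_zero]
  have step2 : LocLipHomeo Fnor ζs ↔ LocLipHomeo Flin ζs := by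
    constructor
    · intro hl
      apply locLipHomeo_perturb Fnor Flin ζs hl hpt
      intro c hc
      obtain ⟨r, hr, hsm⟩ := hδsmall c hc
      refine ⟨r, hr, ?_⟩
      intro a ha b hb'
      have h1 := hsm a ha b hb'
      have e : Flin a - Fnor a = -(Fnor a - Flin a) := by abel
      have e' : Flin b - Fnor b = -(Fnor b - Flin b) := by abel
      rw [e, e', dist_neg_neg]
      exact h1
    · intro hl
      apply locLipHomeo_perturb Flin Fnor ζs hl hpt.symm
      intro c hc
      obtain ⟨r, hr, hsm⟩ := hδsmall c hc
      exact ⟨r, hr, fun a ha b hb' => hsm a ha b hb'⟩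
  have step3 : LocLipHomeo Flin ζs ↔ StrongRegular Φm Kcone zs := by
    constructor
    · exact locLipHomeo_to_strongRegular Φm zs ζs A hA.symm hproj hzero
    · exact strongRegular_to_locLipHomeo Φm zs ζs A hA.symm hproj hzero
  exact step1.trans (step2.trans step3)

end
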